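/- arXiv:2101.00358 — 3 statements merged into one kernel-verified Lean document; each statement's English description precedes it below -/
import Mathlib

section
/- If λ is a symmetric complex 2-tensor with covariant derivatives satisfying the Codazzi relation, then the tensor R̃_{σγαβ} = Re(λ_{γβ} conj(λ_{σα}) − λ_{γα} conj(λ_{σβ})) satisfies the second Bianchi identity: ∇_δ R̃_{σγαβ} + ∇_σ R̃_{γδαβ} + ∇_γ R̃_{δσαβ} = 0. -/
noncomputable section
open Complex

abbrev Euc (d : ℕ) := EuclideanSpace ℝ (Fin d)

/-- The partial derivative `∂_α f` of a function on `ℝ^d`. -/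
noncomputable def pd {d : ℕ} {E : Type*} [NormedAddCommGroup E] [NormedSpace ℝ E]
    (α : Fin d) (f : Euc d → E) (x : Euc d) : E :=
  fderiv ℝ f x (EuclideanSpace.single α 1)

/-- The tensor `R̃_{σγαβ} = Re(λ_{γβ} conj(λ_{σα}) − λ_{γα} conj(λ_{σβ}))`. -/
noncomputable def Rt {d : ℕ} (lam : Fin d → Fin d → Euc d → ℂ)
    (σ γ α β : Fin d) (x : Euc d) : ℝ :=
  (lam γ β x * (starRingEnd ℂ) (lam σ α x) - lam γ α x * (starRingEnd ℂ) (lam σ β x)).re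

/-- The covariant derivative `∇_δ R̃_{σγαβ}` of the (0,4)-tensor `R̃`, written out with
the Christoffel symbols `Γ`. -/
noncomputable def covRt {d : ℕ} (lam : Fin d → Fin d → Euc d → ℂ)
    (Γ : Fin d → Fin d → Fin d → Euc d → ℝ)
    (δ σ γ α β : Fin d) (x : Euc d) : ℝ :=
  pd δ (fun y => Rt lam σ γ α β y) x
    - ∑ μ, Γ μ δ σ x * Rt lam μ γ α β x
    - ∑ μ, Γ μ δ γ x * Rt lam σ μ α β x
    - ∑ μ, Γ μ δ α x * Rt lam σ γ μ β x
    - ∑ μ, Γ μ δ β x * Rt lam σ γ α μ x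

/-! ### Auxiliary lemmas -/

lemma pd_re' {d : ℕ} (f : Euc d → ℂ) (hf : Differentiable ℝ f) (δ : Fin d) (x : Euc d) :
    pd δ (fun y => (f y).re) x = (pd δ f x).re := by
  unfold pd
  have h : HasFDerivAt (fun y => (f y).re) (Complex.reCLM.comp (fderiv ℝ f x)) x :=
    (Complex.reCLM.hasFDerivAt).comp x (hf x).hasFDerivAt
  rw [h.fderiv]; rfl

lemma pd_conj' {d : ℕ} (f : Euc d → ℂ) (hf : Differentiable ℝ f) (δ : Fin d) (x : Euc d) :
    pd δ (fun y => (starRingEnd ℂ) (f y)) x = (starRingEnd ℂ) (pd δ f x) := by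
  unfold pd
  have h : HasFDerivAt (fun y => (starRingEnd ℂ) (f y))
      ((Complex.conjCLE.toContinuousLinearMap).comp (fderiv ℝ f x)) x :=
    ((Complex.conjCLE.toContinuousLinearMap).hasFDerivAt).comp x (hf x).hasFDerivAt
  rw [h.fderiv]; rfl

lemma pd_mul' {d : ℕ} (f g : Euc d → ℂ) (hf : Differentiable ℝ f) (hg : Differentiable ℝ g)
    (δ : Fin d) (x : Euc d) :
    pd δ (fun y => f y * g y) x = pd δ f x * g x + f x * pd δ g x := by
  unfold pd
  rw [fderiv_fun_mul (hf x) (hg x)]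
  simp [smul_eq_mul]; ring

lemma pd_sub' {d : ℕ} (f g : Euc d → ℂ) (hf : Differentiable ℝ f) (hg : Differentiable ℝ g)
    (δ : Fin d) (x : Euc d) :
    pd δ (fun y => f y - g y) x = pd δ f x - pd δ g x := by
  unfold pd
  rw [fderiv_fun_sub (hf x) (hg x)]; rfl

/-- The Leibniz rule for `∂_δ R̃`. -/
lemma pd_Rt' {d : ℕ} (lam : Fin d → Fin d → Euc d → ℂ)
    (hlamDiff : ∀ α β, Differentiable ℝ (fun x => lam α β x))
    (δ σ γ α β : Fin d) (x : Euc d) :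
    pd δ (fun y => Rt lam σ γ α β y) x =
      (pd δ (fun y => lam γ β y) x * (starRingEnd ℂ) (lam σ α x)
        + lam γ β x * (starRingEnd ℂ) (pd δ (fun y => lam σ α y) x)
        - pd δ (fun y => lam γ α y) x * (starRingEnd ℂ) (lam σ β x)
        - lam γ α x * (starRingEnd ℂ) (pd δ (fun y => lam σ β y) x)).re := by
  have hconj : ∀ a b : Fin d, Differentiable ℝ (fun y => (starRingEnd ℂ) (lam a b y)) :=
    fun a b => (Complex.conjCLE.toContinuousLinearMap.differentiable).comp (hlamDiff a b)
  have hdf : ∀ a b c e : Fin d, Differentiable ℝ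
      (fun y => lam a b y * (starRingEnd ℂ) (lam c e y)) :=
    fun a b c e => (hlamDiff a b).mul (hconj c e)
  have h1 : (fun y => Rt lam σ γ α β y) =
      (fun y => ((lam γ β y * (starRingEnd ℂ) (lam σ α y)
        - lam γ α y * (starRingEnd ℂ) (lam σ β y))).re) := rfl
  rw [h1, pd_re' _ (show Differentiable ℝ (fun y => lam γ β y * (starRingEnd ℂ) (lam σ α y)
      - lam γ α y * (starRingEnd ℂ) (lam σ β y)) from ((hdf γ β σ α)).sub (hdf γ α σ β)) δ x,
    pd_sub' _ _ (hdf γ β σ α) (hdf γ α σ β),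
    pd_mul' _ _ (hlamDiff γ β) (hconj σ α),
    pd_mul' _ _ (hlamDiff γ α) (hconj σ β),
    pd_conj' _ (hlamDiff σ α), pd_conj' _ (hlamDiff σ β)]
  ring_nf

/-- The gauge-covariant derivative `∇^A_δ λ_{γβ}`. -/
noncomputable def Dl {d : ℕ} (lam : Fin d → Fin d → Euc d → ℂ)
    (Γ : Fin d → Fin d → Fin d → Euc d → ℝ) (A : Fin d → Euc d → ℝ)
    (δ γ β : Fin d) (x : Euc d) : ℂ :=
  pd δ (fun y => lam γ β y) x + Complex.I * (A δ x : ℂ) * lam γ β x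
    - ∑ μ, (Γ μ δ γ x : ℂ) * lam μ β x - ∑ μ, (Γ μ δ β x : ℂ) * lam γ μ x

/-- The Leibniz rule for `covRt` in terms of `Dl`: the gauge terms cancel. -/
lemma covRt_eq_Dl {d : ℕ} (lam : Fin d → Fin d → Euc d → ℂ)
    (Γ : Fin d → Fin d → Fin d → Euc d → ℝ) (A : Fin d → Euc d → ℝ)
    (hlamDiff : ∀ α β, Differentiable ℝ (fun x => lam α β x))
    (δ σ γ α β : Fin d) (x : Euc d) :
    covRt lam Γ δ σ γ α β x =
      (Dl lam Γ A δ γ β x * (starRingEnd ℂ) (lam σ α x)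
        + lam γ β x * (starRingEnd ℂ) (Dl lam Γ A δ σ α x)
        - Dl lam Γ A δ γ α x * (starRingEnd ℂ) (lam σ β x)
        - lam γ α x * (starRingEnd ℂ) (Dl lam Γ A δ σ β x)).re := by
  unfold covRt
  rw [pd_Rt' lam hlamDiff]
  unfold Rt
  have hsum : ∀ (c : Fin d → ℝ) (z : Fin d → ℂ),
      ∑ μ, c μ * (z μ).re = (∑ μ, (c μ : ℂ) * z μ).re := by
    intro c z
    rw [Complex.re_sum]
    exact Finset.sum_congr rfl fun μ _ => by rw [Complex.re_ofReal_mul]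
  rw [hsum, hsum, hsum, hsum, ← Complex.sub_re, ← Complex.sub_re, ← Complex.sub_re,
    ← Complex.sub_re]
  congr 1
  unfold Dl
  simp only [map_sub, map_add, map_mul, map_sum, Complex.conj_ofReal, Complex.conj_I,
    Complex.conj_conj]
  simp only [sub_mul, add_mul, mul_sub, mul_add, Finset.sum_mul, Finset.mul_sum,
    Finset.sum_sub_distrib]
  ring_nf

/-- If a symmetric complex 2-tensor `λ` satisfies the Codazzi relation
`∇^A_α λ_{βγ} = ∇^A_β λ_{αγ}` for the connection `∇^A = ∇ + iA`, then the tensor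
`R̃_{σγαβ} = Re(λ_{γβ} conj(λ_{σα}) − λ_{γα} conj(λ_{σβ}))` satisfies the second Bianchi
identity `∇_δ R̃_{σγαβ} + ∇_σ R̃_{γδαβ} + ∇_γ R̃_{δσαβ} = 0`. -/
theorem second_bianchi_of_codazzi {d : ℕ}
    (lam : Fin d → Fin d → Euc d → ℂ)
    (Γ : Fin d → Fin d → Fin d → Euc d → ℝ)
    (A : Fin d → Euc d → ℝ)
    (hlamDiff : ∀ α β, Differentiable ℝ (fun x => lam α β x))
    (hΓsymm : ∀ γ α β x, Γ γ α β x = Γ γ β α x)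
    (hlamsymm : ∀ α β x, lam α β x = lam β α x)
    -- the Codazzi relation `∇^A_α λ_{βγ} = ∇^A_β λ_{αγ}`:
    (hCod : ∀ α β γ x,
      pd α (fun y => lam β γ y) x + Complex.I * (A α x : ℂ) * lam β γ x
        - ∑ σ, (Γ σ α β x : ℂ) * lam σ γ x - ∑ σ, (Γ σ α γ x : ℂ) * lam β σ x
      = pd β (fun y => lam α γ y) x + Complex.I * (A β x : ℂ) * lam α γ x
        - ∑ σ, (Γ σ β α x : ℂ) * lam σ γ x - ∑ σ, (Γ σ β γ x : ℂ) * lam α σ x) :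
    ∀ δ σ γ α β x,
      covRt lam Γ δ σ γ α β x + covRt lam Γ σ γ δ α β x + covRt lam Γ γ δ σ α β x = 0 := by
  intro δ σ γ α β x
  -- symmetry of the gauge-covariant derivative in its first two indices (Codazzi)
  have hD12 : ∀ a b c : Fin d, Dl lam Γ A a b c x = Dl lam Γ A b a c x := by
    intro a b c
    unfold Dl
    exact hCod a b c x
  rw [covRt_eq_Dl lam Γ A hlamDiff δ σ γ α β x,
      covRt_eq_Dl lam Γ A hlamDiff σ γ δ α β x,
      covRt_eq_Dl lam Γ A hlamDiff γ δ σ α β x,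
      hD12 σ δ β, hD12 σ δ α, hD12 γ δ α, hD12 γ δ β, hD12 γ σ β, hD12 γ σ α,
      ← Complex.add_re, ← Complex.add_re]
  set Z : ℂ :=
    Dl lam Γ A δ γ β x * (starRingEnd ℂ) (lam σ α x)
        + lam γ β x * (starRingEnd ℂ) (Dl lam Γ A δ σ α x)
        - Dl lam Γ A δ γ α x * (starRingEnd ℂ) (lam σ β x)
        - lam γ α x * (starRingEnd ℂ) (Dl lam Γ A δ σ β x)
      + (Dl lam Γ A δ σ β x * (starRingEnd ℂ) (lam γ α x)
        + lam δ β x * (starRingEnd ℂ) (Dl lam Γ A σ γ α x)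
        - Dl lam Γ A δ σ α x * (starRingEnd ℂ) (lam γ β x)
        - lam δ α x * (starRingEnd ℂ) (Dl lam Γ A σ γ β x))
      + (Dl lam Γ A σ γ β x * (starRingEnd ℂ) (lam δ α x)
        + lam σ β x * (starRingEnd ℂ) (Dl lam Γ A δ γ α x)
        - Dl lam Γ A σ γ α x * (starRingEnd ℂ) (lam δ β x)
        - lam σ α x * (starRingEnd ℂ) (Dl lam Γ A δ γ β x)) with hZ
  have hconjZ : Z + (starRingEnd ℂ) Z = 0 := by
    rw [hZ]
    simp only [map_add, map_sub, map_mul, Complex.conj_conj]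
    ring
  have h3 : (2 : ℝ) * Z.re = 0 := by
    have h := (Complex.add_conj Z).symm.trans hconjZ
    exact_mod_cast h
  linarith
end
end

section
/- Convolution estimate against a polynomially decaying kernel: for 0 < α < d, p > d/(d−α), and f frequency-localized at frequencies ≤ 1, one has ‖⟨x⟩^{α−d} ∗ f‖_{ℓ^p_0 L^∞_t L^2_x} ≲ ‖f‖_{ℓ^1_0 L^∞_t L^2_x}, where ⟨x⟩ = (1+|x|²)^{1/2} and ℓ^p_0 denotes the ℓ^p summation of norms over unit cubes. -/
noncomputable section
open MeasureTheory
open scoped ENNReal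

/-- The unit cube indexed by `n ∈ ℤ^d`. -/
def unitCube (d : ℕ) (n : Fin d → ℤ) : Set (Euc d) :=
  {x | ∀ i, (n i : ℝ) ≤ x i ∧ x i < (n i : ℝ) + 1}

/-- The `ℓ^p_0 L^∞_t L^2_x` norm on `[0,1] × ℝ^d`: `ℓ^p` summation over unit cubes of the
`L^∞` (in time, over `[0,1]`) of the spatial `L²` norms of the localized function. -/
noncomputable def lpLinfL2Norm (d : ℕ) (p : ℝ) (u : ℝ → Euc d → ℂ) : ℝ≥0∞ :=
  (∑' n : Fin d → ℤ,
    (⨆ t : Set.Icc (0 : ℝ) 1, eLpNorm ((unitCube d n).indicator (u t.1)) 2 volume) ^ p) ^ (1 / p)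

/-- Spatial convolution with the kernel `⟨x⟩^{α−d}`. -/
noncomputable def japConv (d : ℕ) (α : ℝ) (u : ℝ → Euc d → ℂ) : ℝ → Euc d → ℂ :=
  fun t x => ∫ y, ((((1 + ‖x - y‖ ^ 2) ^ ((α - d) / 2) : ℝ) : ℂ)) * u t y


def zv (d : ℕ) (n : Fin d → ℤ) : Euc d := WithLp.toLp 2 (fun i => (n i : ℝ))

/-- 1-d summability. -/
lemma summable_oneD {δ : ℝ} (hδ : 1 < 2 * δ) :
    Summable (fun j : ℤ => (1 + (j : ℝ) ^ 2) ^ (-δ)) := by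
  have hδ0 : 0 < δ := by linarith
  have hf1 : Summable (fun j : ℤ => ((|(j : ℝ)|) ^ (2 * δ))⁻¹) := by
    apply Summable.of_nat_of_neg
    · refine (Real.summable_nat_rpow_inv.mpr hδ).congr fun n => ?_
      norm_num
    · refine (Real.summable_nat_rpow_inv.mpr hδ).congr fun n => ?_
      push_cast
      rw [abs_neg]
      norm_num
  have hf2 : Summable (fun j : ℤ => if j = 0 then (1 : ℝ) else 0) := by
    apply summable_of_ne_finset_zero (s := {0})
    intro b hb
    simp only [Finset.mem_singleton] at hb
    simp [hb]
  refine Summable.of_nonneg_of_le (fun j => Real.rpow_nonneg (by positivity) _) ?_ (hf1.add hf2)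
  intro j
  rcases eq_or_ne j 0 with rfl | hj
  · simp only [Int.cast_zero, ne_eq, OfNat.ofNat_ne_zero, not_false_eq_true, zero_pow, add_zero,
      Real.one_rpow, if_pos rfl]
    have : (0:ℝ) ≤ (|(0:ℝ)| ^ (2*δ))⁻¹ := by positivity
    simp only [if_true]
    linarith
  · have h1 : (1:ℝ) ≤ |(j:ℝ)| := by
      rw [← Int.cast_abs]
      exact_mod_cast Int.one_le_abs (by exact_mod_cast hj)
    have hb : |(j:ℝ)| ^ (2*δ) ≤ (1 + (j:ℝ)^2) ^ δ := by
      have : |(j:ℝ)| ^ (2*δ) = ((j:ℝ)^2) ^ δ := by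
        rw [Real.rpow_mul (abs_nonneg _), Real.rpow_two, sq_abs]
      rw [this]
      exact Real.rpow_le_rpow (by positivity) (by linarith) hδ0.le
    have hpos : (0:ℝ) < |(j:ℝ)| ^ (2*δ) := Real.rpow_pos_of_pos (by linarith) _
    rw [Real.rpow_neg (by positivity)]
    calc ((1 + (j:ℝ)^2) ^ δ)⁻¹ ≤ (|(j:ℝ)| ^ (2*δ))⁻¹ := by
          apply inv_anti₀ hpos hb
      _ ≤ (|(j:ℝ)| ^ (2*δ))⁻¹ + (if j = 0 then (1:ℝ) else 0) := by simp [hj]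

lemma tsum_pi_prod (d : ℕ) (g : ℤ → ℝ≥0∞) :
    ∑' k : Fin d → ℤ, ∏ i, g (k i) = (∑' j : ℤ, g j) ^ d := by
  induction d with
  | zero =>
    rw [pow_zero]
    simp only [Finset.univ_eq_empty, Finset.prod_empty]
    exact tsum_eq_single (fun i : Fin 0 => (0:ℤ)) (by intro b hb; exact absurd (funext fun i => i.elim0) hb) |>.trans rfl
  | succ d ih =>
    rw [← (Fin.consEquiv (fun _ : Fin (d+1) => ℤ)).tsum_eq]
    have : ∀ p : ℤ × (Fin d → ℤ),
        (∏ i, g ((Fin.consEquiv (fun _ : Fin (d+1) => ℤ)) p i)) = g p.1 * ∏ i, g (p.2 i) := by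
      rintro ⟨a, k⟩
      rw [Fin.prod_univ_succ]
      simp [Fin.consEquiv]
    calc ∑' c : ℤ × (Fin d → ℤ), ∏ i, g ((Fin.consEquiv (fun _ : Fin (d+1) => ℤ)) c i)
        = ∑' c : ℤ × (Fin d → ℤ), g c.1 * ∏ i, g (c.2 i) := tsum_congr this
      _ = ∑' (a : ℤ) (k : Fin d → ℤ), g a * ∏ i, g (k i) := ENNReal.tsum_prod'
      _ = ∑' (a : ℤ), g a * ∑' (k : Fin d → ℤ), ∏ i, g (k i) := by
          exact tsum_congr fun a => ENNReal.tsum_mul_left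
      _ = (∑' j : ℤ, g j) ^ (d + 1) := by
          rw [ih, ENNReal.tsum_mul_right, pow_succ, mul_comm]

lemma norm_zv_sq (d : ℕ) (x : Euc d) : ‖x‖ ^ 2 = ∑ i, x i ^ 2 := by
  rw [EuclideanSpace.norm_eq, Real.sq_sqrt (by positivity)]
  simp [Real.norm_eq_abs, sq_abs]

lemma tsum_kernel_lt_top (d : ℕ) (hd : 0 < d) (γ : ℝ) (hγ : (d:ℝ) < 2*γ) :
    ∑' k : Fin d → ℤ, ENNReal.ofReal ((1 + ‖zv d k‖ ^ 2) ^ (-γ)) < ⊤ := by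
  set δ : ℝ := γ / d with hδdef
  have hd' : (0:ℝ) < d := by exact_mod_cast hd
  have hδ : 1 < 2 * δ := by
    rw [hδdef, mul_div_assoc']
    exact (one_lt_div hd').mpr hγ
  have hδ0 : 0 < δ := by linarith
  have key : ∀ k : Fin d → ℤ,
      ENNReal.ofReal ((1 + ‖zv d k‖ ^ 2) ^ (-γ)) ≤
        ∏ i, ENNReal.ofReal ((1 + (k i : ℝ) ^ 2) ^ (-δ)) := by
    intro k
    rw [← ENNReal.ofReal_prod_of_nonneg (fun i _ => Real.rpow_nonneg (by positivity) _)]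
    apply ENNReal.ofReal_le_ofReal
    have hS : ‖zv d k‖ ^ 2 = ∑ i, (k i : ℝ) ^ 2 := by
      rw [norm_zv_sq]; rfl
    set S : ℝ := ∑ i, (k i : ℝ) ^ 2 with hSdef
    have hS0 : 0 ≤ S := by positivity
    have hP : ∀ i ∈ Finset.univ, (0:ℝ) < 1 + (k i:ℝ)^2 := fun i _ => by positivity
    have hPpos : (0:ℝ) < ∏ i, (1 + (k i : ℝ) ^ 2) := Finset.prod_pos hP
    have hPle : (∏ i, (1 + (k i : ℝ) ^ 2)) ≤ (1 + S) ^ (d : ℕ) := by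
      calc (∏ i, (1 + (k i : ℝ) ^ 2)) ≤ ∏ _i : Fin d, (1 + S) := by
            apply Finset.prod_le_prod (fun i _ => by positivity)
            intro i _
            have : (k i : ℝ)^2 ≤ S :=
              Finset.single_le_sum (f := fun i => (k i : ℝ)^2) (fun i _ => by positivity)
                (Finset.mem_univ i)
            linarith
        _ = (1 + S) ^ (d : ℕ) := by rw [Finset.prod_const, Finset.card_univ, Fintype.card_fin]
    have step1 : (1 + ‖zv d k‖ ^ 2) ^ (-γ) = ((1 + S) ^ (d:ℝ)) ^ (-δ) := by
      rw [hS, ← Real.rpow_mul (by positivity)]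
      congr 1
      rw [hδdef]; field_simp
    rw [step1]
    calc ((1 + S) ^ (d:ℝ)) ^ (-δ) ≤ (∏ i, (1 + (k i : ℝ) ^ 2)) ^ (-δ) := by
          apply Real.rpow_le_rpow_of_nonpos hPpos _ (by linarith)
          rw [Real.rpow_natCast]
          exact hPle
      _ = ∏ i, (1 + (k i : ℝ) ^ 2) ^ (-δ) :=
          (Real.finset_prod_rpow Finset.univ (fun i => 1 + (k i : ℝ) ^ 2)
            (fun i _ => by positivity) (-δ)).symm
  calc ∑' k : Fin d → ℤ, ENNReal.ofReal ((1 + ‖zv d k‖ ^ 2) ^ (-γ))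
      ≤ ∑' k : Fin d → ℤ, ∏ i, ENNReal.ofReal ((1 + (k i : ℝ) ^ 2) ^ (-δ)) :=
        ENNReal.tsum_le_tsum key
    _ = (∑' j : ℤ, ENNReal.ofReal ((1 + (j : ℝ) ^ 2) ^ (-δ))) ^ d :=
        tsum_pi_prod d (fun j => ENNReal.ofReal ((1 + (j : ℝ) ^ 2) ^ (-δ)))
    _ < ⊤ := by
        apply ENNReal.pow_lt_top
        rw [← ENNReal.ofReal_tsum_of_nonneg (fun j => Real.rpow_nonneg (by positivity) _)
          (summable_oneD hδ)]
        exact ENNReal.ofReal_lt_top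

lemma unitCube_eq (d : ℕ) (n : Fin d → ℤ) :
    unitCube d n = ((MeasurableEquiv.toLp 2 (Fin d → ℝ)).symm) ⁻¹'
      (Set.univ.pi fun i => Set.Ico (n i : ℝ) ((n i : ℝ) + 1)) := by
  ext x
  simp [unitCube, Set.mem_pi, Set.mem_Ico]

lemma measurableSet_unitCube (d : ℕ) (n : Fin d → ℤ) : MeasurableSet (unitCube d n) := by
  rw [unitCube_eq]
  exact ((MeasurableEquiv.toLp 2 (Fin d → ℝ)).symm).measurable
    (MeasurableSet.univ_pi fun i => measurableSet_Ico)

lemma volume_unitCube (d : ℕ) (n : Fin d → ℤ) : volume (unitCube d n) = 1 := by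
  rw [unitCube_eq,
    (EuclideanSpace.volume_preserving_symm_measurableEquiv_toLp (Fin d)).measure_preimage
      (MeasurableSet.univ_pi fun i => measurableSet_Ico).nullMeasurableSet,
    volume_pi_pi]
  simp

lemma unitCube_disjoint (d : ℕ) : Pairwise (Function.onFun Disjoint (unitCube d)) := by
  intro n m hnm
  simp only [Function.onFun, Set.disjoint_left]
  intro x hx hx'
  apply hnm
  funext i
  have h1 := hx i; have h2 := hx' i
  have e1 : ⌊x i⌋ = n i := by rw [Int.floor_eq_iff]; exact ⟨h1.1, h1.2⟩
  have e2 : ⌊x i⌋ = m i := by rw [Int.floor_eq_iff]; exact ⟨h2.1, h2.2⟩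
  omega

lemma iUnion_unitCube (d : ℕ) : (⋃ n, unitCube d n) = Set.univ := by
  ext x
  simp only [Set.mem_iUnion, Set.mem_univ, iff_true]
  exact ⟨fun i => ⌊x i⌋, fun i => ⟨Int.floor_le _, Int.lt_floor_add_one _⟩⟩

lemma lintegral_eq_tsum_unitCube (d : ℕ) (g : Euc d → ℝ≥0∞) :
    ∫⁻ x, g x = ∑' n : Fin d → ℤ, ∫⁻ x in unitCube d n, g x := by
  rw [← lintegral_iUnion (measurableSet_unitCube d) (unitCube_disjoint d) g,
    iUnion_unitCube, Measure.restrict_univ]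

lemma zv_sub (d : ℕ) (n m : Fin d → ℤ) : zv d (n - m) = zv d n - zv d m := by
  ext i
  show ((n - m) i : ℝ) = (zv d n - zv d m) i
  have : (zv d n - zv d m) i = zv d n i - zv d m i := by rw [PiLp.sub_apply]
  rw [this]
  show (((n i) - (m i) : ℤ) : ℝ) = (n i : ℝ) - (m i : ℝ)
  push_cast
  ring

lemma norm_sub_zv_le (d : ℕ) (n : Fin d → ℤ) (x : Euc d) (hx : x ∈ unitCube d n) :
    ‖x - zv d n‖ ≤ Real.sqrt d := by
  have h1 : ‖x - zv d n‖ ^ 2 ≤ (d : ℝ) := by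
    rw [norm_zv_sq]
    calc ∑ i, (x - zv d n) i ^ 2 ≤ ∑ _i : Fin d, (1:ℝ) := by
          apply Finset.sum_le_sum
          intro i _
          have hxi := hx i
          have : (x - zv d n) i = x i - (n i : ℝ) := by simp [zv]
          rw [this]
          nlinarith [hxi.1, hxi.2]
      _ = (d : ℝ) := by simp
  have h2 : ‖x - zv d n‖ ≤ Real.sqrt (‖x - zv d n‖ ^ 2) := by
    rw [Real.sqrt_sq (norm_nonneg _)]
  exact h2.trans (Real.sqrt_le_sqrt h1)

lemma quad_compare (d : ℕ) (n m : Fin d → ℤ) (x y : Euc d)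
    (hx : x ∈ unitCube d n) (hy : y ∈ unitCube d m) :
    (1:ℝ) + ‖zv d (n - m)‖ ^ 2 ≤ (8 * d + 2) * (1 + ‖x - y‖ ^ 2) := by
  set s : ℝ := Real.sqrt d with hs
  have hs0 : 0 ≤ s := Real.sqrt_nonneg _
  have hs2 : s ^ 2 = d := Real.sq_sqrt (by positivity)
  have htri : ‖zv d (n - m)‖ ≤ ‖x - y‖ + 2 * s := by
    rw [zv_sub]
    have hrw : zv d n - zv d m = -(x - zv d n) + (x - y) + (y - zv d m) := by abel
    rw [hrw]
    calc ‖-(x - zv d n) + (x - y) + (y - zv d m)‖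
        ≤ ‖-(x - zv d n) + (x - y)‖ + ‖y - zv d m‖ := norm_add_le _ _
      _ ≤ ‖-(x - zv d n)‖ + ‖x - y‖ + ‖y - zv d m‖ := by
          gcongr; exact norm_add_le _ _
      _ ≤ s + ‖x - y‖ + s := by
          rw [norm_neg]
          gcongr
          · exact norm_sub_zv_le d n x hx
          · exact norm_sub_zv_le d m y hy
      _ = ‖x - y‖ + 2 * s := by ring
  have ha : (0:ℝ) ≤ ‖x - y‖ := norm_nonneg _
  have hz : (0:ℝ) ≤ ‖zv d (n - m)‖ := norm_nonneg _
  have hd0 : (0:ℝ) ≤ d := by positivity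
  nlinarith [mul_self_le_mul_self hz htri, sq_nonneg (‖x - y‖ - 2 * s)]

lemma ker_pointwise (d : ℕ) (α : ℝ) (hαd : α ≤ d) (n m : Fin d → ℤ) (x y : Euc d)
    (hx : x ∈ unitCube d n) (hy : y ∈ unitCube d m) :
    ENNReal.ofReal ((1 + ‖x - y‖ ^ 2) ^ ((α - d) / 2)) ≤
      ENNReal.ofReal ((8 * d + 2 : ℝ) ^ ((d - α) / 2)) *
        ENNReal.ofReal ((1 + ‖zv d (n - m)‖ ^ 2) ^ ((α - d) / 2)) := by
  rw [← ENNReal.ofReal_mul (by positivity)]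
  apply ENNReal.ofReal_le_ofReal
  set e : ℝ := (α - d) / 2 with he
  have he0 : e ≤ 0 := by rw [he]; linarith
  set K : ℝ := 8 * d + 2 with hK
  have hK0 : (0:ℝ) < K := by positivity
  set A : ℝ := 1 + ‖x - y‖ ^ 2 with hA
  set B : ℝ := 1 + ‖zv d (n - m)‖ ^ 2 with hB
  have hA0 : (0:ℝ) < A := by positivity
  have hB0 : (0:ℝ) < B := by positivity
  have hBA : B ≤ K * A := quad_compare d n m x y hx hy
  have key : A ^ e = K ^ ((d - α)/2) * (K * A) ^ e := by
    rw [Real.mul_rpow hK0.le hA0.le, ← mul_assoc, ← Real.rpow_add hK0]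
    have : (d - α)/2 + e = 0 := by rw [he]; ring
    rw [this, Real.rpow_zero, one_mul]
  rw [key]
  exact mul_le_mul_of_nonneg_left (Real.rpow_le_rpow_of_nonpos hB0 hBA he0)
    (Real.rpow_nonneg hK0.le _)

lemma cauchy_schwarz_cube (d : ℕ) (m : Fin d → ℤ) (g : Euc d → ℂ)
    (hg : AEStronglyMeasurable g volume) :
    ∫⁻ y in unitCube d m, (‖g y‖₊ : ℝ≥0∞) ≤
      eLpNorm ((unitCube d m).indicator g) 2 volume := by
  rw [eLpNorm_indicator_eq_eLpNorm_restrict (measurableSet_unitCube d m),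
    eLpNorm_eq_lintegral_rpow_enorm_toReal (by norm_num) (by norm_num)]
  have h2 : ((2 : ℝ≥0∞)).toReal = (2:ℝ) := by norm_num
  rw [h2]
  have hconj : (2:ℝ).HolderConjugate 2 := Real.HolderConjugate.two_two
  have hmeas : AEMeasurable (fun y => (‖g y‖₊ : ℝ≥0∞)) (volume.restrict (unitCube d m)) :=
    (hg.restrict).enorm
  calc ∫⁻ y in unitCube d m, (‖g y‖₊ : ℝ≥0∞)
      = ∫⁻ y in unitCube d m, (‖g y‖₊ : ℝ≥0∞) * 1 := by simp
    _ ≤ (∫⁻ y in unitCube d m, (‖g y‖₊ : ℝ≥0∞) ^ (2:ℝ)) ^ (1/(2:ℝ)) *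
        (∫⁻ y in unitCube d m, (1:ℝ≥0∞) ^ (2:ℝ)) ^ (1/(2:ℝ)) :=
        ENNReal.lintegral_mul_le_Lp_mul_Lq _ hconj hmeas aemeasurable_const
    _ = (∫⁻ y in unitCube d m, (‖g y‖₊ : ℝ≥0∞) ^ (2:ℝ)) ^ (1/(2:ℝ)) := by
        rw [ENNReal.one_rpow, lintegral_one, Measure.restrict_apply_univ, volume_unitCube,
          ENNReal.one_rpow, mul_one]

lemma core_estimate (d : ℕ) (α : ℝ) (hαd : α ≤ d) (n : Fin d → ℤ) (g : Euc d → ℂ)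
    (hg : AEStronglyMeasurable g volume) :
    eLpNorm ((unitCube d n).indicator
      (fun x => ∫ y, (((1 + ‖x - y‖ ^ 2) ^ ((α - ↑d) / 2) : ℝ) : ℂ) * g y)) 2 volume ≤
    ∑' m : Fin d → ℤ, ENNReal.ofReal ((8 * d + 2 : ℝ) ^ (((d:ℝ) - α) / 2)) *
      ENNReal.ofReal ((1 + ‖zv d (n - m)‖ ^ 2) ^ ((α - ↑d) / 2)) *
      eLpNorm ((unitCube d m).indicator g) 2 volume := by
  set u : Euc d → ℂ := fun x => ∫ y, (((1 + ‖x - y‖ ^ 2) ^ ((α - ↑d) / 2) : ℝ) : ℂ) * g y with hu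
  set S : ℝ≥0∞ := ∑' m : Fin d → ℤ, ENNReal.ofReal ((8 * d + 2 : ℝ) ^ (((d:ℝ) - α) / 2)) *
      ENNReal.ofReal ((1 + ‖zv d (n - m)‖ ^ 2) ^ ((α - ↑d) / 2)) *
      eLpNorm ((unitCube d m).indicator g) 2 volume with hS
  have hpt : ∀ x ∈ unitCube d n, (‖u x‖₊ : ℝ≥0∞) ≤ S := by
    intro x hx
    calc (‖u x‖₊ : ℝ≥0∞)
        ≤ ∫⁻ y, ‖(((1 + ‖x - y‖ ^ 2) ^ ((α - ↑d) / 2) : ℝ) : ℂ) * g y‖₊ :=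
          enorm_integral_le_lintegral_enorm _
      _ = ∫⁻ y, ENNReal.ofReal ((1 + ‖x - y‖ ^ 2) ^ ((α - ↑d) / 2)) * (‖g y‖₊ : ℝ≥0∞) := by
          apply lintegral_congr
          intro y
          rw [nnnorm_mul, ENNReal.coe_mul]
          congr 1
          rw [Complex.nnnorm_real]
          exact Real.enorm_eq_ofReal (Real.rpow_nonneg (by positivity) _)
      _ = ∑' m : Fin d → ℤ, ∫⁻ y in unitCube d m,
            ENNReal.ofReal ((1 + ‖x - y‖ ^ 2) ^ ((α - ↑d) / 2)) * (‖g y‖₊ : ℝ≥0∞) :=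
          lintegral_eq_tsum_unitCube d _
      _ ≤ S := by
          rw [hS]
          apply ENNReal.tsum_le_tsum
          intro m
          have hker : ∀ y ∈ unitCube d m,
              ENNReal.ofReal ((1 + ‖x - y‖ ^ 2) ^ ((α - ↑d) / 2)) * (‖g y‖₊ : ℝ≥0∞) ≤
              (ENNReal.ofReal ((8 * d + 2 : ℝ) ^ (((d:ℝ) - α) / 2)) *
                ENNReal.ofReal ((1 + ‖zv d (n - m)‖ ^ 2) ^ ((α - ↑d) / 2))) * (‖g y‖₊ : ℝ≥0∞) :=
            fun y hy => mul_le_mul_left (ker_pointwise d α hαd n m x y hx hy) _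
          calc ∫⁻ y in unitCube d m,
                ENNReal.ofReal ((1 + ‖x - y‖ ^ 2) ^ ((α - ↑d) / 2)) * (‖g y‖₊ : ℝ≥0∞)
              ≤ ∫⁻ y in unitCube d m,
                (ENNReal.ofReal ((8 * d + 2 : ℝ) ^ (((d:ℝ) - α) / 2)) *
                  ENNReal.ofReal ((1 + ‖zv d (n - m)‖ ^ 2) ^ ((α - ↑d) / 2))) * (‖g y‖₊ : ℝ≥0∞) :=
                setLIntegral_mono' (measurableSet_unitCube d m) hker
            _ = (ENNReal.ofReal ((8 * d + 2 : ℝ) ^ (((d:ℝ) - α) / 2)) *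
                  ENNReal.ofReal ((1 + ‖zv d (n - m)‖ ^ 2) ^ ((α - ↑d) / 2))) *
                ∫⁻ y in unitCube d m, (‖g y‖₊ : ℝ≥0∞) :=
                lintegral_const_mul' _ _ (by
                  exact ENNReal.mul_ne_top ENNReal.ofReal_ne_top ENNReal.ofReal_ne_top)
            _ ≤ ENNReal.ofReal ((8 * d + 2 : ℝ) ^ (((d:ℝ) - α) / 2)) *
                  ENNReal.ofReal ((1 + ‖zv d (n - m)‖ ^ 2) ^ ((α - ↑d) / 2)) *
                  eLpNorm ((unitCube d m).indicator g) 2 volume :=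
                mul_le_mul_right (cauchy_schwarz_cube d m g hg) _
  rw [eLpNorm_eq_lintegral_rpow_enorm_toReal (by norm_num) (by norm_num)]
  have h2 : ((2 : ℝ≥0∞)).toReal = (2:ℝ) := by norm_num
  rw [h2]
  have hind : ∀ x, ((‖(unitCube d n).indicator u x‖₊ : ℝ≥0∞)) ^ (2:ℝ) =
      (unitCube d n).indicator (fun x => ((‖u x‖₊ : ℝ≥0∞)) ^ (2:ℝ)) x := by
    intro x
    by_cases hx : x ∈ unitCube d n
    · simp [Set.indicator_of_mem hx]
    · simp only [Set.indicator_of_notMem hx, nnnorm_zero, ENNReal.coe_zero]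
      exact ENNReal.zero_rpow_of_pos (by norm_num)
  calc (∫⁻ x, ((‖(unitCube d n).indicator u x‖₊ : ℝ≥0∞)) ^ (2:ℝ)) ^ (1/(2:ℝ))
      = (∫⁻ x in unitCube d n, ((‖u x‖₊ : ℝ≥0∞)) ^ (2:ℝ)) ^ (1/(2:ℝ)) := by
        rw [lintegral_congr hind, lintegral_indicator (measurableSet_unitCube d n)]
    _ ≤ (∫⁻ _x in unitCube d n, S ^ (2:ℝ)) ^ (1/(2:ℝ)) := by
        apply ENNReal.rpow_le_rpow _ (by norm_num)
        apply setLIntegral_mono' (measurableSet_unitCube d n)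
        intro x hx
        exact ENNReal.rpow_le_rpow (hpt x hx) (by norm_num)
    _ = S := by
        rw [setLIntegral_const, volume_unitCube, mul_one, ← ENNReal.rpow_mul]
        norm_num

lemma tsum_weight_holder {ι : Type*} (w f : ι → ℝ≥0∞) {p : ℝ} (hp : 1 ≤ p) :
    ∑' i, w i * f i ≤ (∑' i, w i) ^ (1 - p⁻¹) * (∑' i, w i * f i ^ p) ^ p⁻¹ := by
  rw [ENNReal.tsum_eq_iSup_sum]
  apply iSup_le
  intro s
  calc ∑ i ∈ s, w i * f i
      ≤ (∑ i ∈ s, w i) ^ (1 - p⁻¹) * (∑ i ∈ s, w i * f i ^ p) ^ p⁻¹ :=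
        ENNReal.inner_le_weight_mul_Lp_of_nonneg s hp w f
    _ ≤ (∑' i, w i) ^ (1 - p⁻¹) * (∑' i, w i * f i ^ p) ^ p⁻¹ := by
        apply mul_le_mul'
        · exact ENNReal.rpow_le_rpow (ENNReal.sum_le_tsum s) (by
            have : p⁻¹ ≤ 1 := by
              rw [inv_le_one_iff₀]; right; linarith
            linarith)
        · exact ENNReal.rpow_le_rpow (ENNReal.sum_le_tsum s) (by positivity)


/-- Convolution estimate against a polynomially decaying kernel.  For
`0 < α < d`, `p > d/(d−α)` and `f` frequency-localized at frequencies `≲ 1`,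
`‖⟨x⟩^{α−d} ∗ f‖_{ℓ^p_0 L^∞ L²} ≲ ‖f‖_{ℓ^1_0 L^∞ L²}`. -/
theorem convolution_decay_estimate (d : ℕ) (hd : 0 < d) (α : ℝ) (hα0 : 0 < α)
    (hαd : α < d) (p : ℝ) (hp : (d : ℝ) / ((d : ℝ) - α) < p) :
    ∃ C : ℝ≥0∞, C ≠ ⊤ ∧
      ∀ f : ℝ → Euc d → ℂ,
        (∀ t, AEStronglyMeasurable (f t) volume) →
        (∀ t, Integrable (f t) volume) →
        (∀ t ξ, 2 < ‖ξ‖ → FourierTransform.fourier (f t) ξ = 0) →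
        lpLinfL2Norm d p (japConv d α f) ≤ C * lpLinfL2Norm d 1 f := by
  have hd' : (0:ℝ) < d := by exact_mod_cast hd
  have hda : (0:ℝ) < (d:ℝ) - α := by linarith
  have hp1 : (1:ℝ) < p := by
    have : (1:ℝ) < (d:ℝ) / ((d:ℝ) - α) := by
      rw [lt_div_iff₀ hda]; linarith
    linarith
  have hp0 : (0:ℝ) < p := by linarith
  -- constants
  set κ : ℝ≥0∞ := ENNReal.ofReal ((8 * d + 2 : ℝ) ^ (((d:ℝ) - α) / 2)) with hκ
  set Kc : (Fin d → ℤ) → ℝ≥0∞ :=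
    fun k => ENNReal.ofReal ((1 + ‖zv d k‖ ^ 2) ^ ((α - (d:ℝ)) / 2)) with hKc
  set γ : ℝ := ((d:ℝ) - α) * p / 2 with hγ
  have hγd : (d:ℝ) < 2 * γ := by
    rw [hγ]
    rw [div_lt_iff₀ hda] at hp
    calc (d:ℝ) < p * ((d:ℝ) - α) := hp
      _ = 2 * (((d:ℝ) - α) * p / 2) := by ring
  have hKcp : ∀ k, Kc k ^ p = ENNReal.ofReal ((1 + ‖zv d k‖ ^ 2) ^ (-γ)) := by
    intro k
    rw [hKc]
    rw [ENNReal.ofReal_rpow_of_pos (Real.rpow_pos_of_pos (by positivity) _)]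
    congr 1
    rw [← Real.rpow_mul (by positivity)]
    congr 1
    rw [hγ]; ring
  have hM : (∑' k : Fin d → ℤ, Kc k ^ p) < ⊤ := by
    calc (∑' k : Fin d → ℤ, Kc k ^ p)
        = ∑' k : Fin d → ℤ, ENNReal.ofReal ((1 + ‖zv d k‖ ^ 2) ^ (-γ)) := tsum_congr hKcp
      _ < ⊤ := tsum_kernel_lt_top d hd γ hγd
  set M : ℝ≥0∞ := ∑' k : Fin d → ℤ, Kc k ^ p with hMdef
  refine ⟨κ * M ^ (1/p), ?_, ?_⟩
  · exact ENNReal.mul_ne_top ENNReal.ofReal_ne_top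
      (ENNReal.rpow_ne_top_of_nonneg (by positivity) hM.ne)
  intro f hmeas hint _hfreq
  set b : (Fin d → ℤ) → ℝ≥0∞ := fun m =>
    ⨆ t : Set.Icc (0:ℝ) 1, eLpNorm ((unitCube d m).indicator (f t.1)) 2 volume with hb
  set a : (Fin d → ℤ) → ℝ≥0∞ := fun n =>
    ⨆ t : Set.Icc (0:ℝ) 1, eLpNorm ((unitCube d n).indicator (japConv d α f t.1)) 2 volume
    with ha'
  set B : ℝ≥0∞ := ∑' m, b m with hB
  have hRHS : lpLinfL2Norm d 1 f = B := by
    rw [lpLinfL2Norm, hB]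
    simp only [ENNReal.rpow_one, one_div_one]; rfl
  have hLHS : lpLinfL2Norm d p (japConv d α f) = (∑' n, a n ^ p) ^ (1/p) := rfl
  have ha : ∀ n, a n ≤ ∑' m, b m * (κ * Kc (n - m)) := by
    intro n
    apply iSup_le
    intro t
    calc eLpNorm ((unitCube d n).indicator (japConv d α f t.1)) 2 volume
        ≤ ∑' m : Fin d → ℤ, κ * Kc (n - m) *
            eLpNorm ((unitCube d m).indicator (f t.1)) 2 volume :=
          core_estimate d α hαd.le n (f t.1) (hmeas t.1)
      _ ≤ ∑' m, b m * (κ * Kc (n - m)) := by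
          apply ENNReal.tsum_le_tsum
          intro m
          rw [mul_comm (κ * Kc (n - m))]
          exact mul_le_mul_left
            (le_iSup (fun t : Set.Icc (0:ℝ) 1 =>
              eLpNorm ((unitCube d m).indicator (f t.1)) 2 volume) t) _
  have hap : ∀ n, a n ^ p ≤ B ^ (p - 1) * ∑' m, b m * (κ * Kc (n - m)) ^ p := by
    intro n
    calc a n ^ p ≤ (∑' m, b m * (κ * Kc (n - m))) ^ p :=
          ENNReal.rpow_le_rpow (ha n) hp0.le
      _ ≤ ((∑' m, b m) ^ (1 - p⁻¹) * (∑' m, b m * (κ * Kc (n - m)) ^ p) ^ p⁻¹) ^ p :=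
          ENNReal.rpow_le_rpow (tsum_weight_holder b _ hp1.le) hp0.le
      _ = B ^ (p - 1) * ∑' m, b m * (κ * Kc (n - m)) ^ p := by
          rw [ENNReal.mul_rpow_of_nonneg _ _ hp0.le, ← ENNReal.rpow_mul, ← ENNReal.rpow_mul,
            ← hB]
          congr 1
          · congr 1
            field_simp
          · rw [inv_mul_cancel₀ hp0.ne', ENNReal.rpow_one]
  have hsum : ∑' n, a n ^ p ≤ B ^ p * (κ ^ p * M) := by
    calc ∑' n, a n ^ p
        ≤ ∑' n, B ^ (p - 1) * ∑' m, b m * (κ * Kc (n - m)) ^ p := ENNReal.tsum_le_tsum hap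
      _ = B ^ (p - 1) * ∑' n, ∑' m, b m * (κ * Kc (n - m)) ^ p := ENNReal.tsum_mul_left
      _ = B ^ (p - 1) * ∑' m, ∑' n, b m * (κ * Kc (n - m)) ^ p := by rw [ENNReal.tsum_comm]
      _ = B ^ (p - 1) * ∑' m, b m * (κ ^ p * M) := by
          congr 1
          apply tsum_congr
          intro m
          rw [ENNReal.tsum_mul_left]
          congr 1
          calc ∑' n, (κ * Kc (n - m)) ^ p
              = ∑' n, κ ^ p * Kc (n - m) ^ p :=
                tsum_congr fun n => ENNReal.mul_rpow_of_nonneg _ _ hp0.le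
            _ = κ ^ p * ∑' n, Kc (n - m) ^ p := ENNReal.tsum_mul_left
            _ = κ ^ p * M := by
                congr 1
                have h := (Equiv.subRight m).tsum_eq (fun k => Kc k ^ p)
                simp only [Equiv.subRight_apply] at h
                exact h
      _ = B ^ (p - 1) * (B * (κ ^ p * M)) := by rw [ENNReal.tsum_mul_right]
      _ = B ^ p * (κ ^ p * M) := by
          rw [← mul_assoc]
          congr 1
          nth_rewrite 2 [show p = (p - 1) + 1 by ring]
          rw [ENNReal.rpow_add_of_nonneg _ _ (by linarith : (0:ℝ) ≤ p - 1) zero_le_one,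
            ENNReal.rpow_one]
  calc lpLinfL2Norm d p (japConv d α f)
      = (∑' n, a n ^ p) ^ (1/p) := hLHS
    _ ≤ (B ^ p * (κ ^ p * M)) ^ (1/p) := ENNReal.rpow_le_rpow hsum (by positivity)
    _ = B * (κ * M ^ (1/p)) := by
        rw [ENNReal.mul_rpow_of_nonneg _ _ (by positivity : (0:ℝ) ≤ 1/p),
          ENNReal.mul_rpow_of_nonneg _ _ (by positivity : (0:ℝ) ≤ 1/p),
          ← ENNReal.rpow_mul, ← ENNReal.rpow_mul,
          mul_one_div_cancel hp0.ne', ENNReal.rpow_one, ENNReal.rpow_one]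
    _ = κ * M ^ (1/p) * lpLinfL2Norm d 1 f := by rw [hRHS]; ring
end
end

section
/- Propagation of orthonormality of the moving frame: suppose (F_α, m) solve the linear ODE system in time ∂_t F_α = −Im(∂^A_α ψ conj(m) − iλ_{αγ}V^γ conj(m)) + [Im(ψ conj(λ^γ_α)) + ∇_α V^γ] F_γ and ∂_t m + iB m = −i(∂^{A,α}ψ − iλ^α_γ V^γ) F_α, with coefficients continuous in time. Define g̃_{α0} = ⟨F_α, m⟩, g̃_{00} = ⟨m,m⟩, and suppose at t = 0: g̃_{α0} = 0, g̃_{00} = 2, ⟨m, conj(m)⟩ = 0, and ⟨F_α, F_β⟩ = g_{αβ} where ∂_t g_{αβ} = 2Im(ψ conj(λ_{αβ})) + ∇_α V_β + ∇_β V_α. Then the quantities (g̃_{α0}, g̃_{00} − 2, ⟨m, conj(m)⟩, g_{αβ} − ⟨F_α,F_β⟩) satisfy a linear homogeneous ODE system in t, and hence vanish identically for all t; in particular the orthogonality relations F_α ⊥ m, ⟨m,m⟩ = 2, ⟨m, conj(m)⟩ = 0, ⟨F_α,F_β⟩ = g_{αβ} are propagated in time. -/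
noncomputable section
open Complex

/-- The raised-index second fundamental form `λ^γ_α = g^{γσ} λ_{σα}` (as a function of
time, at a fixed spatial point). -/
noncomputable def lamUp {d : ℕ} (ginv : Fin d → Fin d → ℝ → ℝ)
    (lam : Fin d → Fin d → ℝ → ℂ) (γ α : Fin d) (t : ℝ) : ℂ :=
  ∑ σ, (ginv γ σ t : ℂ) * lam σ α t

open Finset

lemma hasDerivAt_re' {f : ℝ → ℂ} {f' : ℂ} {t : ℝ} (h : HasDerivAt f f' t) :
    HasDerivAt (fun s => (f s).re) f'.re t := by
  exact (Complex.reCLM.hasFDerivAt.comp_hasDerivAt t h : _)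

lemma hasDerivAt_im' {f : ℝ → ℂ} {f' : ℂ} {t : ℝ} (h : HasDerivAt f f' t) :
    HasDerivAt (fun s => (f s).im) f'.im t := by
  exact (Complex.imCLM.hasFDerivAt.comp_hasDerivAt t h : _)

/-- forward-in-time vanishing for a linearly-bounded ODE system -/
lemma ode_zero_forward {ι : Type*} [Fintype ι] (X D : ι → ℝ → ℂ) (Kf : ℝ → ℝ)
    (hKc : Continuous Kf) (hK0 : ∀ t, 0 ≤ Kf t)
    (hX : ∀ i t, HasDerivAt (X i) (D i t) t)
    (hb : ∀ i t, ‖D i t‖ ≤ Kf t * ∑ j, ‖X j t‖)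
    (h0 : ∀ i, X i 0 = 0) : ∀ t ≥ (0:ℝ), ∀ i, X i t = 0 := by
  intro T hT
  set y : ℝ → ℝ := fun t => ∑ i, ‖X i t‖ ^ 2 with hy_def
  set y' : ℝ → ℝ := fun t => ∑ i, (2 * (X i t).re * (D i t).re + 2 * (X i t).im * (D i t).im)
    with hy'_def
  have hyD : ∀ t, HasDerivAt y (y' t) t := by
    intro t
    apply HasDerivAt.fun_sum
    intro i _
    have h1 : HasDerivAt (fun s => (X i s).re ^ 2 + (X i s).im ^ 2)
        (2 * (X i t).re * (D i t).re + 2 * (X i t).im * (D i t).im) t := by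
      have hr := hasDerivAt_re' (hX i t)
      have hi := hasDerivAt_im' (hX i t)
      have := ((hr.fun_pow 2).fun_add (hi.fun_pow 2))
      simpa [mul_comm, mul_assoc, mul_left_comm] using this
    have heq : (fun s => ‖X i s‖ ^ 2) = fun s => (X i s).re ^ 2 + (X i s).im ^ 2 := by
      funext s
      rw [Complex.sq_norm, Complex.normSq_apply]; ring
    rw [heq]
    exact h1
  have hynn : ∀ t, 0 ≤ y t := fun t => Finset.sum_nonneg fun i _ => sq_nonneg _
  -- sup of Kf on [0,T]
  obtain ⟨z, hz, hzmax⟩ := isCompact_Icc.exists_isMaxOn (Set.nonempty_Icc.2 hT)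
    (hKc.continuousOn (s := Set.Icc 0 T))
  set K : ℝ := 2 * (Fintype.card ι) * Kf z with hK_def
  have hbound : ∀ t ∈ Set.Ico (0:ℝ) T, ‖y' t‖ ≤ K * ‖y t‖ + 0 := by
    intro t ht
    have hS : ∀ j, ‖X j t‖ ≤ ∑ j, ‖X j t‖ := fun j =>
      Finset.single_le_sum (fun j _ => norm_nonneg (X j t)) (Finset.mem_univ j)
    have hterm : ∀ i, |2 * (X i t).re * (D i t).re + 2 * (X i t).im * (D i t).im|
        ≤ 2 * ‖X i t‖ * ‖D i t‖ := by
      intro i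
      have : 2 * (X i t).re * (D i t).re + 2 * (X i t).im * (D i t).im
          = 2 * (X i t * (starRingEnd ℂ) (D i t)).re := by
        simp [Complex.mul_re]; ring
      rw [this, abs_mul]
      have h1 : |(X i t * (starRingEnd ℂ) (D i t)).re| ≤ ‖X i t * (starRingEnd ℂ) (D i t)‖ :=
        Complex.abs_re_le_norm _
      have h2 : ‖X i t * (starRingEnd ℂ) (D i t)‖ = ‖X i t‖ * ‖D i t‖ := by
        rw [norm_mul]; simp
      have h2' : |(2:ℝ)| = 2 := by norm_num
      rw [h2']
      nlinarith [abs_nonneg ((X i t * (starRingEnd ℂ) (D i t)).re), norm_nonneg (X i t), norm_nonneg (D i t)]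
    have hyt : |y' t| ≤ ∑ i, 2 * ‖X i t‖ * ‖D i t‖ :=
      (Finset.abs_sum_le_sum_abs _ _).trans (Finset.sum_le_sum fun i _ => hterm i)
    have h3 : ∑ i, 2 * ‖X i t‖ * ‖D i t‖ ≤ ∑ i, 2 * ‖X i t‖ * (Kf t * ∑ j, ‖X j t‖) := by
      apply Finset.sum_le_sum
      intro i _
      exact mul_le_mul_of_nonneg_left (hb i t) (by positivity)
    have h4 : ∑ i, 2 * ‖X i t‖ * (Kf t * ∑ j, ‖X j t‖)
        = 2 * Kf t * (∑ i, ‖X i t‖) ^ 2 := by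
      rw [← Finset.sum_mul, ← Finset.mul_sum]; ring
    have h5 : (∑ i, ‖X i t‖) ^ 2 ≤ (Fintype.card ι) * ∑ i, ‖X i t‖ ^ 2 := by
      simpa using sq_sum_le_card_mul_sum_sq (s := Finset.univ) (f := fun i => ‖X i t‖)
    have hKz : Kf t ≤ Kf z := hzmax ⟨ht.1, ht.2.le⟩
    have : |y' t| ≤ 2 * Kf t * ((Fintype.card ι) * y t) := by
      calc |y' t| ≤ 2 * Kf t * (∑ i, ‖X i t‖) ^ 2 := by
              rw [← h4]; exact hyt.trans h3
        _ ≤ 2 * Kf t * ((Fintype.card ι) * y t) := by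
              apply mul_le_mul_of_nonneg_left _ (by nlinarith [hK0 t])
              simpa [hy_def] using h5
    rw [Real.norm_eq_abs, Real.norm_eq_abs, _root_.abs_of_nonneg (hynn t), add_zero]
    calc |y' t| ≤ 2 * Kf t * ((Fintype.card ι) * y t) := this
      _ ≤ K * y t := by
          rw [hK_def]
          have := hynn t
          have hc : (0:ℝ) ≤ (Fintype.card ι) := by positivity
          nlinarith [hK0 t]
  have hy0 : ‖y 0‖ ≤ 0 := by
    simp [hy_def, h0]
  have := norm_le_gronwallBound_of_norm_deriv_right_le
    (f := y) (f' := y') (δ := 0) (K := K) (ε := 0) (a := 0) (b := T)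
    (fun t _ => (hyD t).continuousAt.continuousWithinAt)
    (fun t _ => (hyD t).hasDerivWithinAt) hy0 hbound
  have hyT : ‖y T‖ ≤ 0 := by
    simpa [gronwallBound_ε0_δ0] using this T ⟨hT, le_refl T⟩
  have hyT0 : y T = 0 := le_antisymm (by
    rw [Real.norm_eq_abs, _root_.abs_of_nonneg (hynn T)] at hyT; exact hyT) (hynn T)
  intro i
  have : ‖X i T‖ ^ 2 = 0 := by
    have := (Finset.sum_eq_zero_iff_of_nonneg (fun i _ => sq_nonneg ‖X i T‖)).1 hyT0 i
      (Finset.mem_univ i)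
    exact this
  simpa using pow_eq_zero_iff (n := 2) (by norm_num) |>.1 this

lemma ode_zero {ι : Type*} [Fintype ι] (X D : ι → ℝ → ℂ) (Kf : ℝ → ℝ)
    (hKc : Continuous Kf) (hK0 : ∀ t, 0 ≤ Kf t)
    (hX : ∀ i t, HasDerivAt (X i) (D i t) t)
    (hb : ∀ i t, ‖D i t‖ ≤ Kf t * ∑ j, ‖X j t‖)
    (h0 : ∀ i, X i 0 = 0) : ∀ t i, X i t = 0 := by
  intro t
  rcases le_or_gt 0 t with ht | ht
  · exact ode_zero_forward X D Kf hKc hK0 hX hb h0 t ht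
  · have hrev := ode_zero_forward (fun i s => X i (-s)) (fun i s => -(D i (-s)))
      (fun s => Kf (-s)) (hKc.comp continuous_neg) (fun s => hK0 (-s))
      (fun i s => by
        have := HasDerivAt.scomp s (hX i (-s)) (hasDerivAt_neg s)
        simpa [Function.comp_def, smul_eq_mul] using this)
      (fun i s => by simpa using hb i (-s))
      (fun i => by simpa using h0 i)
    intro i
    have := hrev (-t) (by linarith) i
    simpa using this




section aux
variable {d : ℕ} (Fv : Fin d → ℝ → Fin (d + 2) → ℝ) (m : ℝ → Fin (d + 2) → ℂ)
  (ψ : ℝ → ℂ) (B : ℝ → ℝ) (lam : Fin d → Fin d → ℝ → ℂ) (V : Fin d → ℝ → ℝ)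
  (g ginv : Fin d → Fin d → ℝ → ℝ) (dAψ : Fin d → ℝ → ℂ) (upDAψ : Fin d → ℝ → ℂ)
  (covDV covDVl : Fin d → Fin d → ℝ → ℝ)

def cc (α : Fin d) (t : ℝ) : ℂ := dAψ α t - Complex.I * ∑ γ, lam α γ t * (V γ t : ℂ)

def cU (β : Fin d) (t : ℝ) : ℂ :=
  upDAψ β t - Complex.I * ∑ γ, lamUp ginv lam β γ t * (V γ t : ℂ)

def aa (α γ : Fin d) (t : ℝ) : ℝ :=
  (ψ t * (starRingEnd ℂ) (lamUp ginv lam γ α t)).im + covDV α γ t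

def HH (α : Fin d) (t : ℝ) : ℂ := ∑ j, (Fv α t j : ℂ) * (starRingEnd ℂ) (m t j)

def PP (t : ℝ) : ℂ := ∑ j, m t j * (starRingEnd ℂ) (m t j)

def QQ (t : ℝ) : ℂ := ∑ j, m t j * m t j

def GG (α β : Fin d) (t : ℝ) : ℝ := ∑ j, Fv α t j * Fv β t j

variable (hginv' : ∀ α β t, ∑ σ, g α σ t * ginv σ β t = if α = β then 1 else 0)
  (hgsymm : ∀ α β t, g α β t = g β α t)

-- `∑_β g_{αβ} λ^β{}_γ = λ_{αγ}`
include hginv' in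
lemma LL (α γ : Fin d) (t : ℝ) :
    ∑ β, (g α β t : ℂ) * lamUp ginv lam β γ t = lam α γ t := by
  unfold lamUp
  calc ∑ β, (g α β t : ℂ) * ∑ σ, (ginv β σ t : ℂ) * lam σ γ t
      = ∑ β, ∑ σ, ((g α β t * ginv β σ t : ℝ) : ℂ) * lam σ γ t := by
        refine Finset.sum_congr rfl fun β _ => ?_
        rw [Finset.mul_sum]
        refine Finset.sum_congr rfl fun σ _ => ?_
        push_cast; ring
    _ = ∑ σ, ∑ β, ((g α β t * ginv β σ t : ℝ) : ℂ) * lam σ γ t := Finset.sum_comm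
    _ = ∑ σ, ((∑ β, g α β t * ginv β σ t : ℝ) : ℂ) * lam σ γ t := by
        refine Finset.sum_congr rfl fun σ _ => ?_
        push_cast
        rw [Finset.sum_mul]
    _ = ∑ σ, ((if α = σ then 1 else 0 : ℝ) : ℂ) * lam σ γ t := by
        refine Finset.sum_congr rfl fun σ _ => ?_
        rw [hginv' α σ t]
    _ = lam α γ t := by
        simp [apply_ite (fun x : ℝ => (x : ℂ)), ite_mul, Finset.sum_ite_eq]

include hginv' hgsymm in
lemma K3 (α β : Fin d) (t : ℝ) :
    ∑ γ, (g γ β t : ℂ) * lamUp ginv lam γ α t = lam β α t := by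
  have : ∀ γ, (g γ β t : ℂ) = (g β γ t : ℂ) := fun γ => by rw [hgsymm]
  calc ∑ γ, (g γ β t : ℂ) * lamUp ginv lam γ α t
      = ∑ γ, (g β γ t : ℂ) * lamUp ginv lam γ α t :=
        Finset.sum_congr rfl fun γ _ => by rw [this γ]
    _ = lam β α t := LL lam g ginv hginv' β α t

include hginv' in
lemma K1 (hup : ∀ α t, upDAψ α t = ∑ μ, (ginv α μ t : ℂ) * dAψ μ t) (α : Fin d) (t : ℝ) :
    ∑ β, (g α β t : ℂ) * cU lam V ginv upDAψ β t = cc lam V dAψ α t := by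
  unfold cU cc
  have e1 : ∑ β, (g α β t : ℂ) * upDAψ β t = dAψ α t := by
    calc ∑ β, (g α β t : ℂ) * upDAψ β t
        = ∑ β, ∑ μ, ((g α β t * ginv β μ t : ℝ) : ℂ) * dAψ μ t := by
          refine Finset.sum_congr rfl fun β _ => ?_
          rw [hup β t, Finset.mul_sum]
          refine Finset.sum_congr rfl fun μ _ => ?_
          push_cast; ring
      _ = ∑ μ, ∑ β, ((g α β t * ginv β μ t : ℝ) : ℂ) * dAψ μ t := Finset.sum_comm
      _ = ∑ μ, ((∑ β, g α β t * ginv β μ t : ℝ) : ℂ) * dAψ μ t := by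
          refine Finset.sum_congr rfl fun μ _ => ?_
          push_cast
          rw [Finset.sum_mul]
      _ = ∑ μ, ((if α = μ then 1 else 0 : ℝ) : ℂ) * dAψ μ t := by
          refine Finset.sum_congr rfl fun μ _ => ?_
          rw [hginv' α μ t]
      _ = dAψ α t := by
          simp [apply_ite (fun x : ℝ => (x : ℂ)), ite_mul, Finset.sum_ite_eq]
  have e2 : ∑ β, (g α β t : ℂ) * ∑ γ, lamUp ginv lam β γ t * (V γ t : ℂ)
      = ∑ γ, lam α γ t * (V γ t : ℂ) := by
    calc ∑ β, (g α β t : ℂ) * ∑ γ, lamUp ginv lam β γ t * (V γ t : ℂ)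
        = ∑ β, ∑ γ, ((g α β t : ℂ) * lamUp ginv lam β γ t) * (V γ t : ℂ) := by
          refine Finset.sum_congr rfl fun β _ => ?_
          rw [Finset.mul_sum]
          refine Finset.sum_congr rfl fun γ _ => ?_
          ring
      _ = ∑ γ, ∑ β, ((g α β t : ℂ) * lamUp ginv lam β γ t) * (V γ t : ℂ) := Finset.sum_comm
      _ = ∑ γ, lam α γ t * (V γ t : ℂ) := by
          refine Finset.sum_congr rfl fun γ _ => ?_
          rw [← Finset.sum_mul, LL lam g ginv hginv' α γ t]
  calc ∑ β, (g α β t : ℂ) * (upDAψ β t - Complex.I * ∑ γ, lamUp ginv lam β γ t * (V γ t : ℂ))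
      = ∑ β, ((g α β t : ℂ) * upDAψ β t
          - Complex.I * ((g α β t : ℂ) * ∑ γ, lamUp ginv lam β γ t * (V γ t : ℂ))) := by
        refine Finset.sum_congr rfl fun β _ => ?_; ring
    _ = (∑ β, (g α β t : ℂ) * upDAψ β t)
        - Complex.I * ∑ β, (g α β t : ℂ) * ∑ γ, lamUp ginv lam β γ t * (V γ t : ℂ) := by
        rw [Finset.sum_sub_distrib, Finset.mul_sum]
    _ = dAψ α t - Complex.I * ∑ γ, lam α γ t * (V γ t : ℂ) := by rw [e1, e2]

lemma K4 (hgsymm : ∀ α β t, g α β t = g β α t)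
    (hgODE : ∀ α β t, HasDerivAt (g α β)
      (2 * (ψ t * (starRingEnd ℂ) (lam α β t)).im + covDVl α β t + covDVl β α t) t)
    (α β : Fin d) (t : ℝ) :
    (ψ t * (starRingEnd ℂ) (lam α β t)).im = (ψ t * (starRingEnd ℂ) (lam β α t)).im := by
  have e1 := hgODE α β t
  have e2 := hgODE β α t
  have hfe : g α β = g β α := funext fun s => hgsymm α β s
  rw [hfe] at e1
  have := e1.unique e2
  linarith

include hginv' hgsymm in
lemma K2 (hlow : ∀ α β t, covDVl α β t = ∑ γ, g β γ t * covDV α γ t) (α β : Fin d) (t : ℝ) :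
    ∑ γ, aa ψ lam ginv covDV α γ t * g γ β t
      = (ψ t * (starRingEnd ℂ) (lam β α t)).im + covDVl α β t := by
  unfold aa
  rw [Finset.sum_congr rfl fun γ _ => add_mul _ _ _, Finset.sum_add_distrib]
  have e2 : ∑ γ, covDV α γ t * g γ β t = covDVl α β t := by
    rw [hlow α β t]
    exact Finset.sum_congr rfl fun γ _ => by rw [hgsymm γ β t]; ring
  have e1 : ∑ γ, (ψ t * (starRingEnd ℂ) (lamUp ginv lam γ α t)).im * g γ β t
      = (ψ t * (starRingEnd ℂ) (lam β α t)).im := by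
    have term : ∀ γ : Fin d, (ψ t * (starRingEnd ℂ) (lamUp ginv lam γ α t)).im * g γ β t
        = (ψ t * (starRingEnd ℂ) ((g γ β t : ℂ) * lamUp ginv lam γ α t)).im := by
      intro γ
      rw [map_mul]
      rw [Complex.conj_ofReal]
      rw [show ψ t * ((g γ β t : ℂ) * (starRingEnd ℂ) (lamUp ginv lam γ α t))
        = (ψ t * (starRingEnd ℂ) (lamUp ginv lam γ α t)) * (g γ β t : ℂ) by ring]
      rw [Complex.mul_im]
      simp
    rw [Finset.sum_congr rfl fun γ _ => term γ]
    rw [← Complex.im_sum]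
    rw [← Finset.mul_sum, ← map_sum]
    rw [K3 lam g ginv hginv' hgsymm α β t]
  rw [e1, e2]

lemma him (z : ℂ) : ((z.im : ℝ) : ℂ) = (z - (starRingEnd ℂ) z) * (-Complex.I) / 2 := by
  rw [Complex.sub_conj]
  push_cast
  linear_combination (z.im : ℂ) * Complex.I_mul_I

include hginv' in
lemma hasDeriv_H
    (hup : ∀ α t, upDAψ α t = ∑ μ, (ginv α μ t : ℂ) * dAψ μ t)
    (hFODE : ∀ α j t, HasDerivAt (fun s => Fv α s j)
        (-(((dAψ α t - Complex.I * ∑ γ, lam α γ t * (V γ t : ℂ)) *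
              (starRingEnd ℂ) (m t j)).im)
          + ∑ γ, ((ψ t * (starRingEnd ℂ) (lamUp ginv lam γ α t)).im + covDV α γ t) *
              Fv γ t j) t)
    (hmODE : ∀ j t, HasDerivAt (fun s => m s j)
        (-Complex.I * (B t : ℂ) * m t j
          - Complex.I * ∑ β, (upDAψ β t - Complex.I * ∑ γ, lamUp ginv lam β γ t * (V γ t : ℂ))
              * (Fv β t j : ℂ)) t)
    (α : Fin d) (t : ℝ) :
    HasDerivAt (HH Fv m α)
      (∑ γ, ((aa ψ lam ginv covDV α γ t : ℝ) : ℂ) * HH Fv m γ t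
        + Complex.I * (B t : ℂ) * HH Fv m α t
        + Complex.I / 2 * cc lam V dAψ α t * (starRingEnd ℂ) (QQ m t)
        - Complex.I / 2 * (starRingEnd ℂ) (cc lam V dAψ α t) * (PP m t - 2)
        - Complex.I * ∑ β, (starRingEnd ℂ) (cU lam V ginv upDAψ β t)
            * ((g α β t - GG Fv α β t : ℝ) : ℂ)) t := by
  have raw : HasDerivAt (HH Fv m α)
      (∑ j, (((-((cc lam V dAψ α t * (starRingEnd ℂ) (m t j)).im)
            + ∑ γ, aa ψ lam ginv covDV α γ t * Fv γ t j : ℝ) : ℂ) * (starRingEnd ℂ) (m t j)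
        + (Fv α t j : ℂ) * (starRingEnd ℂ) (-Complex.I * (B t : ℂ) * m t j
            - Complex.I * ∑ β, cU lam V ginv upDAψ β t * (Fv β t j : ℂ)))) t := by
    unfold HH
    refine HasDerivAt.fun_sum fun j _ => ?_
    have h2 : HasDerivAt (fun s => (starRingEnd ℂ) (m s j))
        ((starRingEnd ℂ) (-Complex.I * (B t : ℂ) * m t j
          - Complex.I * ∑ β, cU lam V ginv upDAψ β t * (Fv β t j : ℂ))) t := by
      exact (hmODE j t).star
    have h1 : HasDerivAt (fun s => ((Fv α s j : ℝ) : ℂ))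
        (((-((cc lam V dAψ α t * (starRingEnd ℂ) (m t j)).im)
            + ∑ γ, aa ψ lam ginv covDV α γ t * Fv γ t j : ℝ) : ℂ)) t := by
      exact (hFODE α j t).ofReal_comp
    exact h1.mul h2
  have E : (∑ j, (((-((cc lam V dAψ α t * (starRingEnd ℂ) (m t j)).im)
            + ∑ γ, aa ψ lam ginv covDV α γ t * Fv γ t j : ℝ) : ℂ) * (starRingEnd ℂ) (m t j)
        + (Fv α t j : ℂ) * (starRingEnd ℂ) (-Complex.I * (B t : ℂ) * m t j
            - Complex.I * ∑ β, cU lam V ginv upDAψ β t * (Fv β t j : ℂ))))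
      = ∑ γ, ((aa ψ lam ginv covDV α γ t : ℝ) : ℂ) * HH Fv m γ t
        + Complex.I * (B t : ℂ) * HH Fv m α t
        + Complex.I / 2 * cc lam V dAψ α t * (starRingEnd ℂ) (QQ m t)
        - Complex.I / 2 * (starRingEnd ℂ) (cc lam V dAψ α t) * (PP m t - 2)
        - Complex.I * ∑ β, (starRingEnd ℂ) (cU lam V ginv upDAψ β t)
            * ((g α β t - GG Fv α β t : ℝ) : ℂ) := by
    set c := cc lam V dAψ α t with hc
    have point : ∀ j : Fin (d + 2),
        (((-((c * (starRingEnd ℂ) (m t j)).im)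
            + ∑ γ, aa ψ lam ginv covDV α γ t * Fv γ t j : ℝ) : ℂ) * (starRingEnd ℂ) (m t j)
          + (Fv α t j : ℂ) * (starRingEnd ℂ) (-Complex.I * (B t : ℂ) * m t j
              - Complex.I * ∑ β, cU lam V ginv upDAψ β t * (Fv β t j : ℂ)))
        = Complex.I / 2 * c * ((starRingEnd ℂ) (m t j) * (starRingEnd ℂ) (m t j))
          - Complex.I / 2 * (starRingEnd ℂ) c * (m t j * (starRingEnd ℂ) (m t j))
          + ∑ γ, ((aa ψ lam ginv covDV α γ t : ℝ) : ℂ)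
              * ((Fv γ t j : ℂ) * (starRingEnd ℂ) (m t j))
          + Complex.I * (B t : ℂ) * ((Fv α t j : ℂ) * (starRingEnd ℂ) (m t j))
          + Complex.I * ∑ β, (starRingEnd ℂ) (cU lam V ginv upDAψ β t)
              * ((Fv α t j : ℂ) * (Fv β t j : ℂ)) := by
      intro j
      have hconj : (starRingEnd ℂ) (-Complex.I * (B t : ℂ) * m t j
            - Complex.I * ∑ β, cU lam V ginv upDAψ β t * (Fv β t j : ℂ))
          = Complex.I * (B t : ℂ) * (starRingEnd ℂ) (m t j)
            + Complex.I * ∑ β, (starRingEnd ℂ) (cU lam V ginv upDAψ β t) * (Fv β t j : ℂ) := by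
        rw [map_sub, map_mul, map_mul, map_mul, map_sum]
        simp only [map_neg, Complex.conj_I, Complex.conj_ofReal]
        rw [Finset.sum_congr rfl fun β _ => by rw [map_mul, Complex.conj_ofReal]]
        ring
      rw [hconj]
      have himz := him (c * (starRingEnd ℂ) (m t j))
      rw [map_mul, Complex.conj_conj] at himz
      push_cast
      have hgam : ∑ γ, ((aa ψ lam ginv covDV α γ t : ℝ) : ℂ)
            * ((Fv γ t j : ℂ) * (starRingEnd ℂ) (m t j))
          = (∑ γ, ((aa ψ lam ginv covDV α γ t : ℝ) : ℂ) * (Fv γ t j : ℂ))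
            * (starRingEnd ℂ) (m t j) := by
        rw [Finset.sum_mul]
        exact Finset.sum_congr rfl fun γ _ => by ring
      have hbet : ∑ β, (starRingEnd ℂ) (cU lam V ginv upDAψ β t)
            * ((Fv α t j : ℂ) * (Fv β t j : ℂ))
          = (Fv α t j : ℂ) * ∑ β, (starRingEnd ℂ) (cU lam V ginv upDAψ β t)
            * (Fv β t j : ℂ) := by
        rw [Finset.mul_sum]
        exact Finset.sum_congr rfl fun β _ => by ring
      rw [hgam, hbet]
      linear_combination (-(starRingEnd ℂ (m t j))) * himz
    rw [Finset.sum_congr rfl fun j _ => point j]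
    rw [Finset.sum_add_distrib, Finset.sum_add_distrib, Finset.sum_add_distrib,
      Finset.sum_sub_distrib]
    have E1a : ∑ j, Complex.I / 2 * c * ((starRingEnd ℂ) (m t j) * (starRingEnd ℂ) (m t j))
        = Complex.I / 2 * c * (starRingEnd ℂ) (QQ m t) := by
      rw [← Finset.mul_sum]
      unfold QQ
      rw [map_sum]
      rw [Finset.sum_congr rfl fun j _ => (map_mul (starRingEnd ℂ) (m t j) (m t j))]
    have E1b : ∑ j, Complex.I / 2 * (starRingEnd ℂ) c * (m t j * (starRingEnd ℂ) (m t j))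
        = Complex.I / 2 * (starRingEnd ℂ) c * PP m t := by
      rw [← Finset.mul_sum]; rfl
    have E2 : ∑ j, ∑ γ, ((aa ψ lam ginv covDV α γ t : ℝ) : ℂ)
          * ((Fv γ t j : ℂ) * (starRingEnd ℂ) (m t j))
        = ∑ γ, ((aa ψ lam ginv covDV α γ t : ℝ) : ℂ) * HH Fv m γ t := by
      rw [Finset.sum_comm]
      exact Finset.sum_congr rfl fun γ _ => by rw [← Finset.mul_sum]; rfl
    have E3 : ∑ j, Complex.I * (B t : ℂ) * ((Fv α t j : ℂ) * (starRingEnd ℂ) (m t j))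
        = Complex.I * (B t : ℂ) * HH Fv m α t := by
      rw [← Finset.mul_sum]; rfl
    have E4 : ∑ j, Complex.I * ∑ β, (starRingEnd ℂ) (cU lam V ginv upDAψ β t)
          * ((Fv α t j : ℂ) * (Fv β t j : ℂ))
        = Complex.I * ∑ β, (starRingEnd ℂ) (cU lam V ginv upDAψ β t)
          * ((GG Fv α β t : ℝ) : ℂ) := by
      rw [← Finset.mul_sum]
      congr 1
      rw [Finset.sum_comm]
      refine Finset.sum_congr rfl fun β _ => ?_
      rw [← Finset.mul_sum]
      congr 1
      unfold GG
      push_cast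
      exact Finset.sum_congr rfl fun j _ => by ring
    rw [E1a, E1b, E2, E3, E4]
    -- now use K1
    have hK1 := K1 lam V g ginv dAψ upDAψ hginv' hup α t
    have conjK1 : ∑ β, (starRingEnd ℂ) (cU lam V ginv upDAψ β t) * ((g α β t : ℝ) : ℂ)
        = (starRingEnd ℂ) c := by
      have := congrArg (starRingEnd ℂ) hK1
      rw [map_sum] at this
      rw [← this]
      exact Finset.sum_congr rfl fun β _ => by
        rw [map_mul, Complex.conj_ofReal]; ring
    have hsplit : ∑ β, (starRingEnd ℂ) (cU lam V ginv upDAψ β t)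
          * ((g α β t - GG Fv α β t : ℝ) : ℂ)
        = (∑ β, (starRingEnd ℂ) (cU lam V ginv upDAψ β t) * ((g α β t : ℝ) : ℂ))
          - ∑ β, (starRingEnd ℂ) (cU lam V ginv upDAψ β t) * ((GG Fv α β t : ℝ) : ℂ) := by
      rw [← Finset.sum_sub_distrib]
      refine Finset.sum_congr rfl fun β _ => ?_
      push_cast
      ring
    rw [hsplit, conjK1]
    ring
  exact E ▸ raw

lemma conj_HH (α : Fin d) (t : ℝ) :
    (starRingEnd ℂ) (HH Fv m α t) = ∑ j, (Fv α t j : ℂ) * m t j := by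
  unfold HH
  rw [map_sum]
  refine Finset.sum_congr rfl fun j _ => ?_
  rw [map_mul, Complex.conj_ofReal, Complex.conj_conj]

lemma hasDeriv_P
    (hmODE : ∀ j t, HasDerivAt (fun s => m s j)
        (-Complex.I * (B t : ℂ) * m t j
          - Complex.I * ∑ β, (upDAψ β t - Complex.I * ∑ γ, lamUp ginv lam β γ t * (V γ t : ℂ))
              * (Fv β t j : ℂ)) t)
    (t : ℝ) :
    HasDerivAt (PP m)
      ((-Complex.I) * (∑ β, cU lam V ginv upDAψ β t * HH Fv m β t)
        + Complex.I * (starRingEnd ℂ) (∑ β, cU lam V ginv upDAψ β t * HH Fv m β t)) t := by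
  have raw : HasDerivAt (PP m)
      (∑ j, ((-Complex.I * (B t : ℂ) * m t j
            - Complex.I * ∑ β, cU lam V ginv upDAψ β t * (Fv β t j : ℂ)) * (starRingEnd ℂ) (m t j)
          + m t j * (starRingEnd ℂ) (-Complex.I * (B t : ℂ) * m t j
            - Complex.I * ∑ β, cU lam V ginv upDAψ β t * (Fv β t j : ℂ)))) t := by
    unfold PP
    refine HasDerivAt.fun_sum fun j _ => ?_
    exact (hmODE j t).mul (hmODE j t).star
  have E : (∑ j, ((-Complex.I * (B t : ℂ) * m t j
            - Complex.I * ∑ β, cU lam V ginv upDAψ β t * (Fv β t j : ℂ)) * (starRingEnd ℂ) (m t j)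
          + m t j * (starRingEnd ℂ) (-Complex.I * (B t : ℂ) * m t j
            - Complex.I * ∑ β, cU lam V ginv upDAψ β t * (Fv β t j : ℂ))))
      = (-Complex.I) * (∑ β, cU lam V ginv upDAψ β t * HH Fv m β t)
        + Complex.I * (starRingEnd ℂ) (∑ β, cU lam V ginv upDAψ β t * HH Fv m β t) := by
    have point : ∀ j : Fin (d + 2),
        ((-Complex.I * (B t : ℂ) * m t j
            - Complex.I * ∑ β, cU lam V ginv upDAψ β t * (Fv β t j : ℂ)) * (starRingEnd ℂ) (m t j)
          + m t j * (starRingEnd ℂ) (-Complex.I * (B t : ℂ) * m t j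
            - Complex.I * ∑ β, cU lam V ginv upDAψ β t * (Fv β t j : ℂ)))
        = (-Complex.I) * ∑ β, cU lam V ginv upDAψ β t
              * ((Fv β t j : ℂ) * (starRingEnd ℂ) (m t j))
          + Complex.I * ∑ β, (starRingEnd ℂ) (cU lam V ginv upDAψ β t)
              * ((Fv β t j : ℂ) * m t j) := by
      intro j
      have hconj : (starRingEnd ℂ) (-Complex.I * (B t : ℂ) * m t j
            - Complex.I * ∑ β, cU lam V ginv upDAψ β t * (Fv β t j : ℂ))
          = Complex.I * (B t : ℂ) * (starRingEnd ℂ) (m t j)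
            + Complex.I * ∑ β, (starRingEnd ℂ) (cU lam V ginv upDAψ β t) * (Fv β t j : ℂ) := by
        rw [map_sub, map_mul, map_mul, map_mul, map_sum]
        simp only [map_neg, Complex.conj_I, Complex.conj_ofReal]
        rw [Finset.sum_congr rfl fun β _ => by rw [map_mul, Complex.conj_ofReal]]
        ring
      rw [hconj]
      have h1 : ∑ β, cU lam V ginv upDAψ β t * ((Fv β t j : ℂ) * (starRingEnd ℂ) (m t j))
          = (∑ β, cU lam V ginv upDAψ β t * (Fv β t j : ℂ)) * (starRingEnd ℂ) (m t j) := by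
        rw [Finset.sum_mul]
        exact Finset.sum_congr rfl fun β _ => by ring
      have h2 : ∑ β, (starRingEnd ℂ) (cU lam V ginv upDAψ β t) * ((Fv β t j : ℂ) * m t j)
          = m t j * ∑ β, (starRingEnd ℂ) (cU lam V ginv upDAψ β t) * (Fv β t j : ℂ) := by
        rw [Finset.mul_sum]
        exact Finset.sum_congr rfl fun β _ => by ring
      rw [h1, h2]
      ring
    rw [Finset.sum_congr rfl fun j _ => point j, Finset.sum_add_distrib]
    rw [← Finset.mul_sum, ← Finset.mul_sum]
    congr 1
    · congr 1
      rw [Finset.sum_comm]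
      refine Finset.sum_congr rfl fun β _ => ?_
      rw [← Finset.mul_sum]; rfl
    · rw [map_sum]
      rw [Finset.sum_congr rfl fun β _ => (by
        rw [map_mul, conj_HH] : (starRingEnd ℂ) (cU lam V ginv upDAψ β t * HH Fv m β t)
          = (starRingEnd ℂ) (cU lam V ginv upDAψ β t) * ∑ j, (Fv β t j : ℂ) * m t j)]
      congr 1
      rw [Finset.sum_comm]
      refine Finset.sum_congr rfl fun β _ => ?_
      rw [← Finset.mul_sum]
  exact E ▸ raw

lemma hasDeriv_Q
    (hmODE : ∀ j t, HasDerivAt (fun s => m s j)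
        (-Complex.I * (B t : ℂ) * m t j
          - Complex.I * ∑ β, (upDAψ β t - Complex.I * ∑ γ, lamUp ginv lam β γ t * (V γ t : ℂ))
              * (Fv β t j : ℂ)) t)
    (t : ℝ) :
    HasDerivAt (QQ m)
      ((-2) * Complex.I * (B t : ℂ) * QQ m t
        - 2 * Complex.I * ∑ β, cU lam V ginv upDAψ β t * (starRingEnd ℂ) (HH Fv m β t)) t := by
  have raw : HasDerivAt (QQ m)
      (∑ j, ((-Complex.I * (B t : ℂ) * m t j
            - Complex.I * ∑ β, cU lam V ginv upDAψ β t * (Fv β t j : ℂ)) * m t j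
          + m t j * (-Complex.I * (B t : ℂ) * m t j
            - Complex.I * ∑ β, cU lam V ginv upDAψ β t * (Fv β t j : ℂ)))) t := by
    unfold QQ
    refine HasDerivAt.fun_sum fun j _ => ?_
    exact (hmODE j t).mul (hmODE j t)
  have E : (∑ j, ((-Complex.I * (B t : ℂ) * m t j
            - Complex.I * ∑ β, cU lam V ginv upDAψ β t * (Fv β t j : ℂ)) * m t j
          + m t j * (-Complex.I * (B t : ℂ) * m t j
            - Complex.I * ∑ β, cU lam V ginv upDAψ β t * (Fv β t j : ℂ))))
      = (-2) * Complex.I * (B t : ℂ) * QQ m t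
        - 2 * Complex.I * ∑ β, cU lam V ginv upDAψ β t * (starRingEnd ℂ) (HH Fv m β t) := by
    have point : ∀ j : Fin (d + 2),
        ((-Complex.I * (B t : ℂ) * m t j
            - Complex.I * ∑ β, cU lam V ginv upDAψ β t * (Fv β t j : ℂ)) * m t j
          + m t j * (-Complex.I * (B t : ℂ) * m t j
            - Complex.I * ∑ β, cU lam V ginv upDAψ β t * (Fv β t j : ℂ)))
        = (-2) * Complex.I * (B t : ℂ) * (m t j * m t j)
          - 2 * Complex.I * ∑ β, cU lam V ginv upDAψ β t * ((Fv β t j : ℂ) * m t j) := by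
      intro j
      have h1 : ∑ β, cU lam V ginv upDAψ β t * ((Fv β t j : ℂ) * m t j)
          = (∑ β, cU lam V ginv upDAψ β t * (Fv β t j : ℂ)) * m t j := by
        rw [Finset.sum_mul]
        exact Finset.sum_congr rfl fun β _ => by ring
      rw [h1]
      ring
    rw [Finset.sum_congr rfl fun j _ => point j, Finset.sum_sub_distrib]
    have hq1 : ∑ j, (-2) * Complex.I * (B t : ℂ) * (m t j * m t j)
        = (-2) * Complex.I * (B t : ℂ) * QQ m t := by
      rw [← Finset.mul_sum]; rfl
    have hq2 : ∑ j, 2 * Complex.I * ∑ β, cU lam V ginv upDAψ β t * ((Fv β t j : ℂ) * m t j)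
        = 2 * Complex.I * ∑ β, cU lam V ginv upDAψ β t * (starRingEnd ℂ) (HH Fv m β t) := by
      rw [← Finset.mul_sum]
      congr 1
      rw [Finset.sum_comm]
      refine Finset.sum_congr rfl fun β _ => ?_
      rw [← Finset.mul_sum, conj_HH]
    rw [hq1, hq2]
  exact E ▸ raw

include hginv' hgsymm in
lemma hasDeriv_R
    (hlow : ∀ α β t, covDVl α β t = ∑ γ, g β γ t * covDV α γ t)
    (hgODE : ∀ α β t, HasDerivAt (g α β)
        (2 * (ψ t * (starRingEnd ℂ) (lam α β t)).im + covDVl α β t + covDVl β α t) t)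
    (hFODE : ∀ α j t, HasDerivAt (fun s => Fv α s j)
        (-(((dAψ α t - Complex.I * ∑ γ, lam α γ t * (V γ t : ℂ)) *
              (starRingEnd ℂ) (m t j)).im)
          + ∑ γ, ((ψ t * (starRingEnd ℂ) (lamUp ginv lam γ α t)).im + covDV α γ t) *
              Fv γ t j) t)
    (α β : Fin d) (t : ℝ) :
    HasDerivAt (fun s => ((g α β s - GG Fv α β s : ℝ) : ℂ))
      ((((cc lam V dAψ α t * HH Fv m β t).im + (cc lam V dAψ β t * HH Fv m α t).im
        + ∑ γ, aa ψ lam ginv covDV α γ t * (g γ β t - GG Fv γ β t)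
        + ∑ γ, aa ψ lam ginv covDV β γ t * (g γ α t - GG Fv γ α t) : ℝ) : ℂ)) t := by
  have cross : ∀ (α β : Fin d), ∑ j, ((-((cc lam V dAψ α t * (starRingEnd ℂ) (m t j)).im)
        + ∑ γ, aa ψ lam ginv covDV α γ t * Fv γ t j) * Fv β t j)
      = -((cc lam V dAψ α t * HH Fv m β t).im) + ∑ γ, aa ψ lam ginv covDV α γ t * GG Fv γ β t := by
    intro α β
    rw [Finset.sum_congr rfl fun j _ => add_mul _ _ _, Finset.sum_add_distrib]
    congr 1
    · -- ∑ j, -(c * conj m).im * F = -(c * HH β).im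
      have pt : ∀ j : Fin (d + 2), -((cc lam V dAψ α t * (starRingEnd ℂ) (m t j)).im) * Fv β t j
          = -((cc lam V dAψ α t * ((Fv β t j : ℂ) * (starRingEnd ℂ) (m t j))).im) := by
        intro j
        rw [show cc lam V dAψ α t * ((Fv β t j : ℂ) * (starRingEnd ℂ) (m t j))
          = (cc lam V dAψ α t * (starRingEnd ℂ) (m t j)) * ((Fv β t j : ℝ) : ℂ) by ring]
        simp only [Complex.mul_im, Complex.ofReal_re, Complex.ofReal_im]
        ring
      rw [Finset.sum_congr rfl fun j _ => pt j, Finset.sum_neg_distrib, ← Complex.im_sum,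
        ← Finset.mul_sum]
      rfl
    · have pt2 : ∀ j : Fin (d + 2), (∑ γ, aa ψ lam ginv covDV α γ t * Fv γ t j) * Fv β t j
          = ∑ γ, aa ψ lam ginv covDV α γ t * (Fv γ t j * Fv β t j) := by
        intro j
        rw [Finset.sum_mul]
        exact Finset.sum_congr rfl fun γ _ => by ring
      rw [Finset.sum_congr rfl fun j _ => pt2 j, Finset.sum_comm]
      exact Finset.sum_congr rfl fun γ _ => by rw [← Finset.mul_sum]; rfl
  have rawG : HasDerivAt (GG Fv α β)
      ((-((cc lam V dAψ α t * HH Fv m β t).im) + ∑ γ, aa ψ lam ginv covDV α γ t * GG Fv γ β t)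
       + (-((cc lam V dAψ β t * HH Fv m α t).im) + ∑ γ, aa ψ lam ginv covDV β γ t * GG Fv γ α t)) t := by
    have raw : HasDerivAt (GG Fv α β)
        (∑ j, ((-((cc lam V dAψ α t * (starRingEnd ℂ) (m t j)).im)
              + ∑ γ, aa ψ lam ginv covDV α γ t * Fv γ t j) * Fv β t j
          + Fv α t j * (-((cc lam V dAψ β t * (starRingEnd ℂ) (m t j)).im)
              + ∑ γ, aa ψ lam ginv covDV β γ t * Fv γ t j))) t := by
      unfold GG
      refine HasDerivAt.fun_sum fun j _ => ?_
      exact (hFODE α j t).mul (hFODE β j t)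
    have E2 : (∑ j, ((-((cc lam V dAψ α t * (starRingEnd ℂ) (m t j)).im)
              + ∑ γ, aa ψ lam ginv covDV α γ t * Fv γ t j) * Fv β t j
          + Fv α t j * (-((cc lam V dAψ β t * (starRingEnd ℂ) (m t j)).im)
              + ∑ γ, aa ψ lam ginv covDV β γ t * Fv γ t j)))
        = (-((cc lam V dAψ α t * HH Fv m β t).im) + ∑ γ, aa ψ lam ginv covDV α γ t * GG Fv γ β t)
          + (-((cc lam V dAψ β t * HH Fv m α t).im)
              + ∑ γ, aa ψ lam ginv covDV β γ t * GG Fv γ α t) := by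
      rw [Finset.sum_add_distrib]
      rw [cross α β]
      congr 1
      rw [Finset.sum_congr rfl fun j _ => mul_comm (Fv α t j) _]
      exact cross β α
    exact E2 ▸ raw
  have hreal : HasDerivAt (fun s => g α β s - GG Fv α β s)
      ((2 * (ψ t * (starRingEnd ℂ) (lam α β t)).im + covDVl α β t + covDVl β α t)
        - ((-((cc lam V dAψ α t * HH Fv m β t).im) + ∑ γ, aa ψ lam ginv covDV α γ t * GG Fv γ β t)
          + (-((cc lam V dAψ β t * HH Fv m α t).im)
              + ∑ γ, aa ψ lam ginv covDV β γ t * GG Fv γ α t))) t :=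
    (hgODE α β t).sub rawG
  have Edr : ((2 * (ψ t * (starRingEnd ℂ) (lam α β t)).im + covDVl α β t + covDVl β α t)
        - ((-((cc lam V dAψ α t * HH Fv m β t).im) + ∑ γ, aa ψ lam ginv covDV α γ t * GG Fv γ β t)
          + (-((cc lam V dAψ β t * HH Fv m α t).im)
              + ∑ γ, aa ψ lam ginv covDV β γ t * GG Fv γ α t)))
      = ((cc lam V dAψ α t * HH Fv m β t).im + (cc lam V dAψ β t * HH Fv m α t).im
        + ∑ γ, aa ψ lam ginv covDV α γ t * (g γ β t - GG Fv γ β t)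
        + ∑ γ, aa ψ lam ginv covDV β γ t * (g γ α t - GG Fv γ α t)) := by
    have s1 : ∑ γ, aa ψ lam ginv covDV α γ t * (g γ β t - GG Fv γ β t)
        = (∑ γ, aa ψ lam ginv covDV α γ t * g γ β t)
          - ∑ γ, aa ψ lam ginv covDV α γ t * GG Fv γ β t := by
      rw [← Finset.sum_sub_distrib]
      exact Finset.sum_congr rfl fun γ _ => by ring
    have s2 : ∑ γ, aa ψ lam ginv covDV β γ t * (g γ α t - GG Fv γ α t)
        = (∑ γ, aa ψ lam ginv covDV β γ t * g γ α t)
          - ∑ γ, aa ψ lam ginv covDV β γ t * GG Fv γ α t := by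
      rw [← Finset.sum_sub_distrib]
      exact Finset.sum_congr rfl fun γ _ => by ring
    have k2a := K2 ψ lam g ginv covDV covDVl hginv' hgsymm hlow α β t
    have k2b := K2 ψ lam g ginv covDV covDVl hginv' hgsymm hlow β α t
    have k4 := K4 ψ lam g covDVl hgsymm hgODE α β t
    rw [s1, s2, k2a, k2b]
    linarith
  exact Edr ▸ hreal.ofReal_comp

lemma cont_lamUp (hginvc : ∀ α β, Continuous (ginv α β)) (hlamc : ∀ α β, Continuous (lam α β))
    (γ α : Fin d) : Continuous (lamUp ginv lam γ α) := by
  unfold lamUp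
  exact continuous_finset_sum _ fun σ _ =>
    (Complex.continuous_ofReal.comp (hginvc γ σ)).mul (hlamc σ α)

lemma cont_cc (hdAc : ∀ α, Continuous (dAψ α)) (hlamc : ∀ α β, Continuous (lam α β))
    (hVc : ∀ γ, Continuous (V γ)) (α : Fin d) : Continuous (cc lam V dAψ α) := by
  unfold cc
  exact (hdAc α).sub (continuous_const.mul (continuous_finset_sum _ fun γ _ =>
    (hlamc α γ).mul (Complex.continuous_ofReal.comp (hVc γ))))

lemma cont_cU (hupc : ∀ α, Continuous (upDAψ α)) (hginvc : ∀ α β, Continuous (ginv α β))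
    (hlamc : ∀ α β, Continuous (lam α β)) (hVc : ∀ γ, Continuous (V γ)) (β : Fin d) :
    Continuous (cU lam V ginv upDAψ β) := by
  unfold cU
  exact (hupc β).sub (continuous_const.mul (continuous_finset_sum _ fun γ _ =>
    (cont_lamUp lam ginv hginvc hlamc β γ).mul (Complex.continuous_ofReal.comp (hVc γ))))

lemma cont_aa (hψc : Continuous ψ) (hginvc : ∀ α β, Continuous (ginv α β))
    (hlamc : ∀ α β, Continuous (lam α β)) (hcovc : ∀ α γ, Continuous (covDV α γ))
    (α γ : Fin d) : Continuous (aa ψ lam ginv covDV α γ) := by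
  unfold aa
  exact (Complex.continuous_im.comp (hψc.mul
    (continuous_star.comp (cont_lamUp lam ginv hginvc hlamc γ α)))).add (hcovc α γ)

/-- state vector of deviation quantities -/
def XX : Sum (Fin d) (Sum (Fin d × Fin d) Bool) → ℝ → ℂ
  | Sum.inl α => HH Fv m α
  | Sum.inr (Sum.inl p) => fun t => ((g p.1 p.2 t - GG Fv p.1 p.2 t : ℝ) : ℂ)
  | Sum.inr (Sum.inr false) => fun t => PP m t - 2
  | Sum.inr (Sum.inr true) => QQ m

/-- closed-form derivatives of the deviation quantities -/
def DD : Sum (Fin d) (Sum (Fin d × Fin d) Bool) → ℝ → ℂ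
  | Sum.inl α => fun t =>
      ∑ γ, ((aa ψ lam ginv covDV α γ t : ℝ) : ℂ) * HH Fv m γ t
        + Complex.I * (B t : ℂ) * HH Fv m α t
        + Complex.I / 2 * cc lam V dAψ α t * (starRingEnd ℂ) (QQ m t)
        - Complex.I / 2 * (starRingEnd ℂ) (cc lam V dAψ α t) * (PP m t - 2)
        - Complex.I * ∑ β, (starRingEnd ℂ) (cU lam V ginv upDAψ β t)
            * ((g α β t - GG Fv α β t : ℝ) : ℂ)
  | Sum.inr (Sum.inl p) => fun t =>
      (((cc lam V dAψ p.1 t * HH Fv m p.2 t).im + (cc lam V dAψ p.2 t * HH Fv m p.1 t).im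
        + ∑ γ, aa ψ lam ginv covDV p.1 γ t * (g γ p.2 t - GG Fv γ p.2 t)
        + ∑ γ, aa ψ lam ginv covDV p.2 γ t * (g γ p.1 t - GG Fv γ p.1 t) : ℝ) : ℂ)
  | Sum.inr (Sum.inr false) => fun t =>
      (-Complex.I) * (∑ β, cU lam V ginv upDAψ β t * HH Fv m β t)
        + Complex.I * (starRingEnd ℂ) (∑ β, cU lam V ginv upDAψ β t * HH Fv m β t)
  | Sum.inr (Sum.inr true) => fun t =>
      (-2) * Complex.I * (B t : ℂ) * QQ m t
        - 2 * Complex.I * ∑ β, cU lam V ginv upDAψ β t * (starRingEnd ℂ) (HH Fv m β t)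

lemma norm_conj' (z : ℂ) : ‖(starRingEnd ℂ) z‖ = ‖z‖ := norm_star z

lemma tri5 (A B' C D' E : ℂ) : ‖A + B' + C - D' - E‖ ≤ ‖A‖ + ‖B'‖ + ‖C‖ + ‖D'‖ + ‖E‖ := by
  calc ‖A + B' + C - D' - E‖ ≤ ‖A + B' + C - D'‖ + ‖E‖ := norm_sub_le _ _
    _ ≤ (‖A + B' + C‖ + ‖D'‖) + ‖E‖ := by gcongr; exact norm_sub_le _ _
    _ ≤ ((‖A + B'‖ + ‖C‖) + ‖D'‖) + ‖E‖ := by gcongr; exact norm_add_le _ _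
    _ ≤ (((‖A‖ + ‖B'‖) + ‖C‖) + ‖D'‖) + ‖E‖ := by gcongr; exact norm_add_le _ _
    _ = ‖A‖ + ‖B'‖ + ‖C‖ + ‖D'‖ + ‖E‖ := by ring
end aux

/-- Propagation of orthonormality of the moving frame.  Suppose
`(F_α, m)` solve the linear ODE system in time
`∂_t F_α = −Im(∂^A_α ψ conj m − iλ_{αγ}V^γ conj m) + [Im(ψ conj λ^γ_α) + ∇_α V^γ] F_γ`,
`∂_t m + iB m = −i(∂^{A,α}ψ − iλ^α_γ V^γ) F_α`,
with coefficients continuous in time, and that at `t = 0` the orthogonality relations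
`⟨F_α, m⟩ = 0`, `⟨m,m⟩ = 2`, `⟨m, conj m⟩ = 0`, `⟨F_α, F_β⟩ = g_{αβ}` hold, where
`∂_t g_{αβ} = 2 Im(ψ conj λ_{αβ}) + ∇_α V_β + ∇_β V_α`.  Then these relations are
propagated: they hold for all `t`. -/
theorem frame_orthonormality_propagation {d : ℕ}
    (Fv : Fin d → ℝ → Fin (d + 2) → ℝ)            -- the tangent frame `F_α(t)`
    (m : ℝ → Fin (d + 2) → ℂ)                     -- the normal frame `m(t)`
    (ψ : ℝ → ℂ) (B : ℝ → ℝ)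
    (lam : Fin d → Fin d → ℝ → ℂ)                 -- `λ_{αβ}`
    (V : Fin d → ℝ → ℝ)                           -- `V^γ`
    (g ginv : Fin d → Fin d → ℝ → ℝ)
    (dAψ : Fin d → ℝ → ℂ)                         -- the coefficient `∂^A_α ψ`
    (upDAψ : Fin d → ℝ → ℂ)                       -- the coefficient `∂^{A,α} ψ`
    (covDV : Fin d → Fin d → ℝ → ℝ)               -- the coefficient `∇_α V^γ`
    (covDVl : Fin d → Fin d → ℝ → ℝ)              -- the coefficient `∇_α V_β`
    -- continuity of all coefficients in time:
    (hψc : Continuous ψ) (hBc : Continuous B)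
    (hlamc : ∀ α β, Continuous (lam α β)) (hVc : ∀ γ, Continuous (V γ))
    (hgc : ∀ α β, Continuous (g α β)) (hginvc : ∀ α β, Continuous (ginv α β))
    (hdAc : ∀ α, Continuous (dAψ α)) (hupc : ∀ α, Continuous (upDAψ α))
    (hcovc : ∀ α γ, Continuous (covDV α γ)) (hcovlc : ∀ α β, Continuous (covDVl α β))
    -- index raising and lowering relations:
    (hup : ∀ α t, upDAψ α t = ∑ μ, (ginv α μ t : ℂ) * dAψ μ t)
    (hlow : ∀ α β t, covDVl α β t = ∑ γ, g β γ t * covDV α γ t)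
    (hginv : ∀ α β t, ∑ σ, ginv α σ t * g σ β t = if α = β then 1 else 0)
    (hginv' : ∀ α β t, ∑ σ, g α σ t * ginv σ β t = if α = β then 1 else 0)
    (hgsymm : ∀ α β t, g α β t = g β α t)
    -- evolution of the metric:
    (hgODE : ∀ α β t, HasDerivAt (g α β)
        (2 * (ψ t * (starRingEnd ℂ) (lam α β t)).im + covDVl α β t + covDVl β α t) t)
    -- the equations of motion of the frame:
    (hFODE : ∀ α j t, HasDerivAt (fun s => Fv α s j)
        (-(((dAψ α t - Complex.I * ∑ γ, lam α γ t * (V γ t : ℂ)) *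
              (starRingEnd ℂ) (m t j)).im)
          + ∑ γ, ((ψ t * (starRingEnd ℂ) (lamUp ginv lam γ α t)).im + covDV α γ t) *
              Fv γ t j) t)
    (hmODE : ∀ j t, HasDerivAt (fun s => m s j)
        (-Complex.I * (B t : ℂ) * m t j
          - Complex.I * ∑ α, (upDAψ α t - Complex.I * ∑ γ, lamUp ginv lam α γ t * (V γ t : ℂ))
              * (Fv α t j : ℂ)) t)
    -- orthonormality at the initial time:
    (hFm0 : ∀ α, ∑ j, (Fv α 0 j : ℂ) * (starRingEnd ℂ) (m 0 j) = 0)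
    (hmm0 : ∑ j, m 0 j * (starRingEnd ℂ) (m 0 j) = 2)
    (hmmbar0 : ∑ j, m 0 j * m 0 j = 0)
    (hFF0 : ∀ α β, ∑ j, Fv α 0 j * Fv β 0 j = g α β 0) :
    ∀ t : ℝ,
      (∀ α, ∑ j, (Fv α t j : ℂ) * (starRingEnd ℂ) (m t j) = 0) ∧
      (∑ j, m t j * (starRingEnd ℂ) (m t j) = 2) ∧
      (∑ j, m t j * m t j = 0) ∧
      (∀ α β, ∑ j, Fv α t j * Fv β t j = g α β t) := by
  classical
  set Kf : ℝ → ℝ := fun t =>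
    2 * ((∑ α, ∑ γ, |aa ψ lam ginv covDV α γ t|) + |B t|
      + (∑ α, ‖cc lam V dAψ α t‖) + (∑ β, ‖cU lam V ginv upDAψ β t‖)) with hKf_def
  have hKfval : ∀ u, Kf u = 2 * ((∑ α, ∑ γ, |aa ψ lam ginv covDV α γ u|) + |B u|
      + (∑ α, ‖cc lam V dAψ α u‖) + (∑ β, ‖cU lam V ginv upDAψ β u‖)) := fun u => rfl
  have hKc : Continuous Kf := by
    refine continuous_const.mul ?_
    refine Continuous.add (Continuous.add (Continuous.add ?_ ?_) ?_) ?_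
    · exact continuous_finset_sum _ fun α _ => continuous_finset_sum _ fun γ _ =>
        (cont_aa ψ lam ginv covDV hψc hginvc hlamc hcovc α γ).abs
    · exact hBc.abs
    · exact continuous_finset_sum _ fun α _ => (cont_cc lam V dAψ hdAc hlamc hVc α).norm
    · exact continuous_finset_sum _ fun β _ =>
        (cont_cU lam V ginv upDAψ hupc hginvc hlamc hVc β).norm
  have hK0 : ∀ t, 0 ≤ Kf t := by
    intro t
    rw [hKfval t]
    have h1 : (0:ℝ) ≤ ∑ α, ∑ γ, |aa ψ lam ginv covDV α γ t| :=
      Finset.sum_nonneg fun α _ => Finset.sum_nonneg fun γ _ => abs_nonneg _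
    have h2 : (0:ℝ) ≤ ∑ α, ‖cc lam V dAψ α t‖ :=
      Finset.sum_nonneg fun α _ => norm_nonneg _
    have h3 : (0:ℝ) ≤ ∑ β, ‖cU lam V ginv upDAψ β t‖ :=
      Finset.sum_nonneg fun β _ => norm_nonneg _
    have h4 : (0:ℝ) ≤ |B t| := abs_nonneg _
    linarith
  have hX : ∀ i t, HasDerivAt (XX Fv m g i) (DD Fv m ψ B lam V g ginv dAψ upDAψ covDV i t) t := by
    rintro (α | ⟨⟨α, β⟩ | b⟩) t
    · exact hasDeriv_H Fv m ψ B lam V g ginv dAψ upDAψ covDV hginv' hup hFODE hmODE α t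
    · exact hasDeriv_R Fv m ψ lam V g ginv dAψ covDV covDVl hginv' hgsymm hlow hgODE hFODE α β t
    · cases b
      · exact (hasDeriv_P Fv m B lam V ginv upDAψ hmODE t).sub_const 2
      · exact hasDeriv_Q Fv m B lam V ginv upDAψ hmODE t
  have hb : ∀ i t, ‖DD Fv m ψ B lam V g ginv dAψ upDAψ covDV i t‖
      ≤ Kf t * ∑ j, ‖XX Fv m g j t‖ := by
    intro i t
    have hSnn : (0:ℝ) ≤ ∑ j, ‖XX Fv m g j t‖ :=
      Finset.sum_nonneg fun j _ => norm_nonneg _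
    have hXle : ∀ j, ‖XX Fv m g j t‖ ≤ ∑ j, ‖XX Fv m g j t‖ := fun j =>
      Finset.single_le_sum (f := fun j => ‖XX Fv m g j t‖) (fun j _ => norm_nonneg _)
        (Finset.mem_univ j)
    have hHle : ∀ γ, ‖HH Fv m γ t‖ ≤ ∑ j, ‖XX Fv m g j t‖ := fun γ => hXle (Sum.inl γ)
    have hRle : ∀ α β, |g α β t - GG Fv α β t| ≤ ∑ j, ‖XX Fv m g j t‖ := by
      intro α β
      have h' := hXle (Sum.inr (Sum.inl (α, β)))
      rw [show XX Fv m g (Sum.inr (Sum.inl (α, β))) t = ((g α β t - GG Fv α β t : ℝ) : ℂ)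
        from rfl, Complex.norm_real, Real.norm_eq_abs] at h'
      exact h'
    have hPle : ‖PP m t - 2‖ ≤ ∑ j, ‖XX Fv m g j t‖ := hXle (Sum.inr (Sum.inr false))
    have hQle : ‖QQ m t‖ ≤ ∑ j, ‖XX Fv m g j t‖ := hXle (Sum.inr (Sum.inr true))
    -- coefficient facts
    have haa_le : ∀ α : Fin d, ∑ γ, |aa ψ lam ginv covDV α γ t|
        ≤ ∑ α, ∑ γ, |aa ψ lam ginv covDV α γ t| :=
      fun α => Finset.single_le_sum
        (f := fun α => ∑ γ, |aa ψ lam ginv covDV α γ t|)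
        (fun α _ => Finset.sum_nonneg fun γ _ => abs_nonneg _) (Finset.mem_univ α)
    have hcc_le : ∀ α : Fin d, ‖cc lam V dAψ α t‖ ≤ ∑ α, ‖cc lam V dAψ α t‖ :=
      fun α => Finset.single_le_sum (f := fun α => ‖cc lam V dAψ α t‖)
        (fun α _ => norm_nonneg _) (Finset.mem_univ α)
    have hAnn : (0:ℝ) ≤ ∑ α, ∑ γ, |aa ψ lam ginv covDV α γ t| :=
      Finset.sum_nonneg fun α _ => Finset.sum_nonneg fun γ _ => abs_nonneg _
    have hCnn : (0:ℝ) ≤ ∑ α, ‖cc lam V dAψ α t‖ := Finset.sum_nonneg fun α _ => norm_nonneg _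
    have hUnn : (0:ℝ) ≤ ∑ β, ‖cU lam V ginv upDAψ β t‖ :=
      Finset.sum_nonneg fun β _ => norm_nonneg _
    set S := ∑ j, ‖XX Fv m g j t‖ with hS_def
    obtain (α | ⟨⟨α, β⟩ | b⟩) := i
    · -- the H-component
      show ‖∑ γ, ((aa ψ lam ginv covDV α γ t : ℝ) : ℂ) * HH Fv m γ t
        + Complex.I * (B t : ℂ) * HH Fv m α t
        + Complex.I / 2 * cc lam V dAψ α t * (starRingEnd ℂ) (QQ m t)
        - Complex.I / 2 * (starRingEnd ℂ) (cc lam V dAψ α t) * (PP m t - 2)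
        - Complex.I * ∑ β, (starRingEnd ℂ) (cU lam V ginv upDAψ β t)
            * ((g α β t - GG Fv α β t : ℝ) : ℂ)‖ ≤ Kf t * S
      have n1 : ‖∑ γ, ((aa ψ lam ginv covDV α γ t : ℝ) : ℂ) * HH Fv m γ t‖
          ≤ (∑ γ, |aa ψ lam ginv covDV α γ t|) * S := by
        calc ‖∑ γ, ((aa ψ lam ginv covDV α γ t : ℝ) : ℂ) * HH Fv m γ t‖
            ≤ ∑ γ, ‖((aa ψ lam ginv covDV α γ t : ℝ) : ℂ) * HH Fv m γ t‖ :=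
              norm_sum_le _ _
          _ ≤ ∑ γ, |aa ψ lam ginv covDV α γ t| * S := by
              refine Finset.sum_le_sum fun γ _ => ?_
              rw [norm_mul, Complex.norm_real, Real.norm_eq_abs]
              exact mul_le_mul_of_nonneg_left (hHle γ) (abs_nonneg _)
          _ = (∑ γ, |aa ψ lam ginv covDV α γ t|) * S := by rw [Finset.sum_mul]
      have n2 : ‖Complex.I * (B t : ℂ) * HH Fv m α t‖ ≤ |B t| * S := by
        rw [norm_mul, norm_mul, Complex.norm_I, one_mul, Complex.norm_real, Real.norm_eq_abs]
        exact mul_le_mul_of_nonneg_left (hHle α) (abs_nonneg _)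
      have n3 : ‖Complex.I / 2 * cc lam V dAψ α t * (starRingEnd ℂ) (QQ m t)‖
          ≤ ‖cc lam V dAψ α t‖ / 2 * S := by
        rw [norm_mul, norm_mul, norm_div, Complex.norm_I]
        simp only [starRingEnd_apply, norm_star]
        rw [show ‖(2:ℂ)‖ = 2 by norm_num]
        calc 1 / 2 * ‖cc lam V dAψ α t‖ * ‖QQ m t‖
            ≤ 1 / 2 * ‖cc lam V dAψ α t‖ * S := by
              exact mul_le_mul_of_nonneg_left hQle (by positivity)
          _ = ‖cc lam V dAψ α t‖ / 2 * S := by ring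
      have n4 : ‖Complex.I / 2 * (starRingEnd ℂ) (cc lam V dAψ α t) * (PP m t - 2)‖
          ≤ ‖cc lam V dAψ α t‖ / 2 * S := by
        rw [norm_mul, norm_mul, norm_div, Complex.norm_I]
        simp only [starRingEnd_apply, norm_star]
        rw [show ‖(2:ℂ)‖ = 2 by norm_num]
        calc 1 / 2 * ‖cc lam V dAψ α t‖ * ‖PP m t - 2‖
            ≤ 1 / 2 * ‖cc lam V dAψ α t‖ * S := by
              exact mul_le_mul_of_nonneg_left hPle (by positivity)
          _ = ‖cc lam V dAψ α t‖ / 2 * S := by ring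
      have n5 : ‖Complex.I * ∑ β, (starRingEnd ℂ) (cU lam V ginv upDAψ β t)
            * ((g α β t - GG Fv α β t : ℝ) : ℂ)‖
          ≤ (∑ β, ‖cU lam V ginv upDAψ β t‖) * S := by
        rw [norm_mul, Complex.norm_I, one_mul]
        calc ‖∑ β, (starRingEnd ℂ) (cU lam V ginv upDAψ β t)
              * ((g α β t - GG Fv α β t : ℝ) : ℂ)‖
            ≤ ∑ β, ‖(starRingEnd ℂ) (cU lam V ginv upDAψ β t)
              * ((g α β t - GG Fv α β t : ℝ) : ℂ)‖ := norm_sum_le _ _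
          _ ≤ ∑ β, ‖cU lam V ginv upDAψ β t‖ * S := by
              refine Finset.sum_le_sum fun β _ => ?_
              rw [norm_mul]
              simp only [starRingEnd_apply, norm_star]
              rw [Complex.norm_real, Real.norm_eq_abs]
              exact mul_le_mul_of_nonneg_left (hRle α β) (norm_nonneg _)
          _ = (∑ β, ‖cU lam V ginv upDAψ β t‖) * S := by rw [Finset.sum_mul]
      have tri := tri5 (∑ γ, ((aa ψ lam ginv covDV α γ t : ℝ) : ℂ) * HH Fv m γ t)
        (Complex.I * (B t : ℂ) * HH Fv m α t)
        (Complex.I / 2 * cc lam V dAψ α t * (starRingEnd ℂ) (QQ m t))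
        (Complex.I / 2 * (starRingEnd ℂ) (cc lam V dAψ α t) * (PP m t - 2))
        (Complex.I * ∑ β, (starRingEnd ℂ) (cU lam V ginv upDAψ β t)
            * ((g α β t - GG Fv α β t : ℝ) : ℂ))
      have hbr : (∑ γ, |aa ψ lam ginv covDV α γ t|) + |B t| + ‖cc lam V dAψ α t‖ / 2
          + ‖cc lam V dAψ α t‖ / 2 + (∑ β, ‖cU lam V ginv upDAψ β t‖) ≤ Kf t := by
        rw [hKfval t]
        have := haa_le α
        have := hcc_le α
        have := abs_nonneg (B t)
        linarith
      calc _ ≤ _ := tri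
        _ ≤ (∑ γ, |aa ψ lam ginv covDV α γ t|) * S + |B t| * S
            + ‖cc lam V dAψ α t‖ / 2 * S + ‖cc lam V dAψ α t‖ / 2 * S
            + (∑ β, ‖cU lam V ginv upDAψ β t‖) * S := by
            exact add_le_add (add_le_add (add_le_add (add_le_add n1 n2) n3) n4) n5
        _ = ((∑ γ, |aa ψ lam ginv covDV α γ t|) + |B t| + ‖cc lam V dAψ α t‖ / 2
            + ‖cc lam V dAψ α t‖ / 2 + (∑ β, ‖cU lam V ginv upDAψ β t‖)) * S := by ring
        _ ≤ Kf t * S := mul_le_mul_of_nonneg_right hbr hSnn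
    · -- the r-component
      show ‖(((cc lam V dAψ α t * HH Fv m β t).im + (cc lam V dAψ β t * HH Fv m α t).im
        + ∑ γ, aa ψ lam ginv covDV α γ t * (g γ β t - GG Fv γ β t)
        + ∑ γ, aa ψ lam ginv covDV β γ t * (g γ α t - GG Fv γ α t) : ℝ) : ℂ)‖ ≤ Kf t * S
      rw [Complex.norm_real, Real.norm_eq_abs]
      have m1 : |(cc lam V dAψ α t * HH Fv m β t).im| ≤ ‖cc lam V dAψ α t‖ * S := by
        calc |(cc lam V dAψ α t * HH Fv m β t).im| ≤ ‖cc lam V dAψ α t * HH Fv m β t‖ :=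
              Complex.abs_im_le_norm _
          _ = ‖cc lam V dAψ α t‖ * ‖HH Fv m β t‖ := norm_mul _ _
          _ ≤ ‖cc lam V dAψ α t‖ * S := mul_le_mul_of_nonneg_left (hHle β) (norm_nonneg _)
      have m2 : |(cc lam V dAψ β t * HH Fv m α t).im| ≤ ‖cc lam V dAψ β t‖ * S := by
        calc |(cc lam V dAψ β t * HH Fv m α t).im| ≤ ‖cc lam V dAψ β t * HH Fv m α t‖ :=
              Complex.abs_im_le_norm _
          _ = ‖cc lam V dAψ β t‖ * ‖HH Fv m α t‖ := norm_mul _ _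
          _ ≤ ‖cc lam V dAψ β t‖ * S := mul_le_mul_of_nonneg_left (hHle α) (norm_nonneg _)
      have m3 : ∀ α' β' : Fin d, |∑ γ, aa ψ lam ginv covDV α' γ t * (g γ β' t - GG Fv γ β' t)|
          ≤ (∑ γ, |aa ψ lam ginv covDV α' γ t|) * S := by
        intro α' β'
        calc |∑ γ, aa ψ lam ginv covDV α' γ t * (g γ β' t - GG Fv γ β' t)|
            ≤ ∑ γ, |aa ψ lam ginv covDV α' γ t * (g γ β' t - GG Fv γ β' t)| :=
              Finset.abs_sum_le_sum_abs _ _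
          _ ≤ ∑ γ, |aa ψ lam ginv covDV α' γ t| * S := by
              refine Finset.sum_le_sum fun γ _ => ?_
              rw [abs_mul]
              exact mul_le_mul_of_nonneg_left (hRle γ β') (abs_nonneg _)
          _ = (∑ γ, |aa ψ lam ginv covDV α' γ t|) * S := by rw [Finset.sum_mul]
      have habs : |(cc lam V dAψ α t * HH Fv m β t).im + (cc lam V dAψ β t * HH Fv m α t).im
          + ∑ γ, aa ψ lam ginv covDV α γ t * (g γ β t - GG Fv γ β t)
          + ∑ γ, aa ψ lam ginv covDV β γ t * (g γ α t - GG Fv γ α t)|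
          ≤ |(cc lam V dAψ α t * HH Fv m β t).im| + |(cc lam V dAψ β t * HH Fv m α t).im|
          + |∑ γ, aa ψ lam ginv covDV α γ t * (g γ β t - GG Fv γ β t)|
          + |∑ γ, aa ψ lam ginv covDV β γ t * (g γ α t - GG Fv γ α t)| := by
        calc _ ≤ |(cc lam V dAψ α t * HH Fv m β t).im + (cc lam V dAψ β t * HH Fv m α t).im
              + ∑ γ, aa ψ lam ginv covDV α γ t * (g γ β t - GG Fv γ β t)|
              + |∑ γ, aa ψ lam ginv covDV β γ t * (g γ α t - GG Fv γ α t)| := abs_add_le _ _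
          _ ≤ _ := by
              gcongr
              calc _ ≤ |(cc lam V dAψ α t * HH Fv m β t).im
                    + (cc lam V dAψ β t * HH Fv m α t).im|
                  + |∑ γ, aa ψ lam ginv covDV α γ t * (g γ β t - GG Fv γ β t)| := abs_add_le _ _
                _ ≤ _ := by gcongr; exact abs_add_le _ _
      have hbr : ‖cc lam V dAψ α t‖ + ‖cc lam V dAψ β t‖
          + (∑ γ, |aa ψ lam ginv covDV α γ t|) + (∑ γ, |aa ψ lam ginv covDV β γ t|)
          ≤ Kf t := by
        rw [hKfval t]
        have h1 := haa_le α
        have h2 := haa_le β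
        have h3 := hcc_le α
        have h4 := hcc_le β
        have := abs_nonneg (B t)
        linarith
      calc _ ≤ _ := habs
        _ ≤ ‖cc lam V dAψ α t‖ * S + ‖cc lam V dAψ β t‖ * S
            + (∑ γ, |aa ψ lam ginv covDV α γ t|) * S
            + (∑ γ, |aa ψ lam ginv covDV β γ t|) * S := by
            exact add_le_add (add_le_add (add_le_add m1 m2) (m3 α β)) (m3 β α)
        _ = (‖cc lam V dAψ α t‖ + ‖cc lam V dAψ β t‖
            + (∑ γ, |aa ψ lam ginv covDV α γ t|)
            + (∑ γ, |aa ψ lam ginv covDV β γ t|)) * S := by ring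
        _ ≤ Kf t * S := mul_le_mul_of_nonneg_right hbr hSnn
    · -- the P and Q components
      have nS : ‖∑ β, cU lam V ginv upDAψ β t * HH Fv m β t‖
          ≤ (∑ β, ‖cU lam V ginv upDAψ β t‖) * S := by
        calc ‖∑ β, cU lam V ginv upDAψ β t * HH Fv m β t‖
            ≤ ∑ β, ‖cU lam V ginv upDAψ β t * HH Fv m β t‖ := norm_sum_le _ _
          _ ≤ ∑ β, ‖cU lam V ginv upDAψ β t‖ * S := by
              refine Finset.sum_le_sum fun β _ => ?_
              rw [norm_mul]
              exact mul_le_mul_of_nonneg_left (hHle β) (norm_nonneg _)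
          _ = (∑ β, ‖cU lam V ginv upDAψ β t‖) * S := by rw [Finset.sum_mul]
      cases b
      · show ‖(-Complex.I) * (∑ β, cU lam V ginv upDAψ β t * HH Fv m β t)
            + Complex.I * (starRingEnd ℂ) (∑ β, cU lam V ginv upDAψ β t * HH Fv m β t)‖
          ≤ Kf t * S
        have hbr : 2 * (∑ β, ‖cU lam V ginv upDAψ β t‖) ≤ Kf t := by
          rw [hKfval t]
          have := abs_nonneg (B t)
          linarith
        calc ‖(-Complex.I) * (∑ β, cU lam V ginv upDAψ β t * HH Fv m β t)
              + Complex.I * (starRingEnd ℂ) (∑ β, cU lam V ginv upDAψ β t * HH Fv m β t)‖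
            ≤ ‖(-Complex.I) * (∑ β, cU lam V ginv upDAψ β t * HH Fv m β t)‖
              + ‖Complex.I * (starRingEnd ℂ) (∑ β, cU lam V ginv upDAψ β t * HH Fv m β t)‖ :=
              norm_add_le _ _
          _ = ‖∑ β, cU lam V ginv upDAψ β t * HH Fv m β t‖
              + ‖∑ β, cU lam V ginv upDAψ β t * HH Fv m β t‖ := by
              rw [norm_mul, norm_mul, norm_neg, Complex.norm_I, one_mul, one_mul, norm_conj']
          _ ≤ (∑ β, ‖cU lam V ginv upDAψ β t‖) * S + (∑ β, ‖cU lam V ginv upDAψ β t‖) * S :=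
              add_le_add nS nS
          _ = 2 * (∑ β, ‖cU lam V ginv upDAψ β t‖) * S := by ring
          _ ≤ Kf t * S := mul_le_mul_of_nonneg_right hbr hSnn
      · show ‖(-2) * Complex.I * (B t : ℂ) * QQ m t
            - 2 * Complex.I * ∑ β, cU lam V ginv upDAψ β t * (starRingEnd ℂ) (HH Fv m β t)‖
          ≤ Kf t * S
        have nS' : ‖∑ β, cU lam V ginv upDAψ β t * (starRingEnd ℂ) (HH Fv m β t)‖
            ≤ (∑ β, ‖cU lam V ginv upDAψ β t‖) * S := by
          calc ‖∑ β, cU lam V ginv upDAψ β t * (starRingEnd ℂ) (HH Fv m β t)‖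
              ≤ ∑ β, ‖cU lam V ginv upDAψ β t * (starRingEnd ℂ) (HH Fv m β t)‖ :=
                norm_sum_le _ _
            _ ≤ ∑ β, ‖cU lam V ginv upDAψ β t‖ * S := by
                refine Finset.sum_le_sum fun β _ => ?_
                rw [norm_mul]
                simp only [starRingEnd_apply, norm_star]
                exact mul_le_mul_of_nonneg_left (hHle β) (norm_nonneg _)
            _ = (∑ β, ‖cU lam V ginv upDAψ β t‖) * S := by rw [Finset.sum_mul]
        have hbr : 2 * |B t| + 2 * (∑ β, ‖cU lam V ginv upDAψ β t‖) ≤ Kf t := by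
          rw [hKfval t]
          linarith
        calc ‖(-2) * Complex.I * (B t : ℂ) * QQ m t
              - 2 * Complex.I * ∑ β, cU lam V ginv upDAψ β t * (starRingEnd ℂ) (HH Fv m β t)‖
            ≤ ‖(-2) * Complex.I * (B t : ℂ) * QQ m t‖
              + ‖2 * Complex.I * ∑ β, cU lam V ginv upDAψ β t
                  * (starRingEnd ℂ) (HH Fv m β t)‖ := norm_sub_le _ _
          _ = 2 * |B t| * ‖QQ m t‖ + 2 * ‖∑ β, cU lam V ginv upDAψ β t
                  * (starRingEnd ℂ) (HH Fv m β t)‖ := by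
              rw [norm_mul, norm_mul, norm_mul, norm_mul, norm_mul]
              rw [show ‖(-2 : ℂ)‖ = 2 by norm_num, show ‖(2:ℂ)‖ = 2 by norm_num,
                Complex.norm_I, Complex.norm_real, Real.norm_eq_abs]
              ring
          _ ≤ 2 * |B t| * S + 2 * ((∑ β, ‖cU lam V ginv upDAψ β t‖) * S) :=
              add_le_add (mul_le_mul_of_nonneg_left hQle (by positivity))
                (mul_le_mul_of_nonneg_left nS' (by norm_num))
          _ = (2 * |B t| + 2 * (∑ β, ‖cU lam V ginv upDAψ β t‖)) * S := by ring
          _ ≤ Kf t * S := mul_le_mul_of_nonneg_right hbr hSnn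
  have h0 : ∀ i, XX Fv m g i 0 = 0 := by
    rintro (α | ⟨⟨α, β⟩ | b⟩)
    · exact hFm0 α
    · show ((g α β 0 - GG Fv α β 0 : ℝ) : ℂ) = 0
      rw [Complex.ofReal_eq_zero, sub_eq_zero]
      exact (hFF0 α β).symm
    · cases b
      · show PP m 0 - 2 = 0
        rw [sub_eq_zero]
        exact hmm0
      · exact hmmbar0
  have key := ode_zero (XX Fv m g) (DD Fv m ψ B lam V g ginv dAψ upDAψ covDV) Kf hKc hK0 hX hb h0
  intro t
  refine ⟨fun α => key t (Sum.inl α), ?_, key t (Sum.inr (Sum.inr true)), fun α β => ?_⟩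
  · have := key t (Sum.inr (Sum.inr false))
    have h2 : PP m t - 2 = 0 := this
    have := sub_eq_zero.1 h2
    exact this
  · have := key t (Sum.inr (Sum.inl (α, β)))
    have h2 : ((g α β t - GG Fv α β t : ℝ) : ℂ) = 0 := this
    rw [Complex.ofReal_eq_zero, sub_eq_zero] at h2
    exact h2.symm
end
end
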